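/- arXiv:1012.1786 — 2 statements merged into one kernel-verified Lean document; each statement's English description precedes it below -/
import Mathlib

section
/- A topological toric manifold is simply connected. -/
noncomputable section

open Complex Finset

/-- `g^μ` for `μ = (b + c·i, v) ∈ ℂ × ℤ`: `|g|^(b+ci) · (g/|g|)^v`. -/
noncomputable def cpw (b c : ℝ) (v : ℤ) (g : ℂ) : ℂ :=
  (((‖g‖ : ℝ) : ℂ) ^ ((b : ℂ) + (c : ℂ) * Complex.I)) * (g / ((‖g‖ : ℝ) : ℂ)) ^ v

/-- `g^μ` where `μ` is encoded as a triple `(b, c, v) : ℝ × ℝ × ℤ`. -/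
noncomputable def cpwT (t : ℝ × ℝ × ℤ) (g : ℂ) : ℂ := cpw t.1 t.2.1 t.2.2 g

/-- The product `μ₂μ₁ = (b₁b₂, b₁c₂ + c₁v₂, v₁v₂)` in the ring `𝓡 ≅ ℂ × ℤ`. -/
def rmul (μ₂ μ₁ : ℝ × ℝ × ℤ) : ℝ × ℝ × ℤ :=
  (μ₁.1 * μ₂.1, μ₁.1 * μ₂.2.1 + μ₁.2.1 * (μ₂.2.2 : ℝ), μ₁.2.2 * μ₂.2.2)

/-- The identity element of `𝓡`. -/
def rone : ℝ × ℝ × ℤ := (1, 0, 1)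

/-- `⟨α, β⟩ = Σₖ αᵏ βᵏ ∈ 𝓡`. -/
def rinner {n : ℕ} (α β : Fin n → ℝ × ℝ × ℤ) : ℝ × ℝ × ℤ :=
  ∑ k, rmul (α k) (β k)

/-- `χ^α(g₁, …, gₙ) = ∏ₖ gₖ^{αᵏ}`. -/
noncomputable def chi {n : ℕ} (α : Fin n → ℝ × ℝ × ℤ) (g : Fin n → ℂ) : ℂ :=
  ∏ k, cpwT (α k) (g k)

/-- A (compact) topological toric manifold of dimension `2n`: a compact Hausdorff space with
an effective continuous action of `(ℂ*)ⁿ` having a dense orbit, covered by finitely many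
invariant open subsets, each equivariantly homeomorphic to a direct sum of complex
one-dimensional smooth representation spaces of `(ℂ*)ⁿ` (i.e. to `ℂⁿ` where the `k`-th
coordinate is acted on through the smooth character `χ^{α_k}`). -/
structure TopToricManifold (n : ℕ) where
  X : Type
  [ts : TopologicalSpace X]
  [t2 : T2Space X]
  [cpt : CompactSpace X]
  smul : (Fin n → ℂˣ) → X → X
  one_smul : ∀ x, smul 1 x = x
  mul_smul : ∀ g h x, smul (g * h) x = smul g (smul h x)
  continuous_smul : Continuous fun p : ((Fin n → ℂˣ) × X) => smul p.1 p.2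
  effective : ∀ g, (∀ x, smul g x = x) → g = 1
  denseOrbit : ∃ x₀, Dense (Set.range fun g => smul g x₀)
  ι : Type
  finite_ι : Finite ι
  U : ι → Set X
  isOpen_U : ∀ i, IsOpen (U i)
  invariant_U : ∀ i g x, x ∈ U i → smul g x ∈ U i
  cover_U : ∀ x, ∃ i, x ∈ U i
  charts : ∀ i : ι, ∃ α : Fin n → (Fin n → ℝ × ℝ × ℤ),
    ∃ e : (U i) ≃ₜ (Fin n → ℂ),
      ∀ g (x : U i), e ⟨smul g x, invariant_U i g x x.2⟩ =
        fun k => chi (α k) (fun j => ((g j : ℂ))) * e x k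


section Aux

attribute [local instance] Path.Homotopic.setoid

open unitInterval Set

variable {Y : Type*} [TopologicalSpace Y]

/-- Affine map `s ↦ (1-s)u + sv` of the unit interval. -/
def TTM.segMap (u v : I) : C(I, I) where
  toFun s := ⟨(1 - (s : ℝ)) * u + s * v, by
    constructor
    · nlinarith [s.2.1, s.2.2, u.2.1, v.2.1]
    · nlinarith [s.2.1, s.2.2, u.2.2, v.2.2]⟩
  continuous_toFun := by
    apply Continuous.subtype_mk
    fun_prop

@[simp] lemma TTM.segMap_apply (u v : I) (s : I) :
    (TTM.segMap u v s : ℝ) = (1 - (s : ℝ)) * u + s * v := rfl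

/-- The affine subpath of `γ` from `γ u` to `γ v`. -/
def TTM.seg {a b : Y} (γ : Path a b) (u v : I) : Path (γ u) (γ v) where
  toContinuousMap := γ.toContinuousMap.comp (TTM.segMap u v)
  source' := by
    show γ (TTM.segMap u v 0) = γ u
    exact congrArg γ (Subtype.ext (by simp))
  target' := by
    show γ (TTM.segMap u v 1) = γ v
    exact congrArg γ (Subtype.ext (by simp))

@[simp] lemma TTM.seg_apply {a b : Y} (γ : Path a b) (u v : I) (s : I) :
    TTM.seg γ u v s = γ (TTM.segMap u v s) := rfl

lemma TTM.segMap_mem_Icc {u v : I} (huv : u ≤ v) (s : I) :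
    TTM.segMap u v s ∈ Icc u v := by
  have h := s.2.1; have h' := s.2.2
  have huv' : (u : ℝ) ≤ v := huv
  constructor
  · show (u : ℝ) ≤ (1 - (s : ℝ)) * u + s * v
    nlinarith
  · show ((1 - (s : ℝ)) * u + s * v : ℝ) ≤ v
    nlinarith

/-- Two paths that factor through a common path `γ` via interval maps with equal endpoints
are homotopic (by convexity of the interval). -/
lemma TTM.homotopic_of_comp {x y a b : Y} (γ : Path a b) (ψ₁ ψ₂ : C(I, I))
    {p q : Path x y} (hp : ∀ s, p s = γ (ψ₁ s)) (hq : ∀ s, q s = γ (ψ₂ s))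
    (h0 : ψ₁ 0 = ψ₂ 0) (h1 : ψ₁ 1 = ψ₂ 1) : p.Homotopic q := by
  have hmem : ∀ ts : I × I, (1 - (ts.1 : ℝ)) * (ψ₁ ts.2) + ts.1 * (ψ₂ ts.2) ∈ Icc (0:ℝ) 1 := by
    intro ts
    constructor
    · nlinarith [ts.1.2.1, ts.1.2.2, (ψ₁ ts.2).2.1, (ψ₂ ts.2).2.1]
    · nlinarith [ts.1.2.1, ts.1.2.2, (ψ₁ ts.2).2.2, (ψ₂ ts.2).2.2]
  let Φ : C(I × I, I) :=
    ⟨fun ts => ⟨(1 - (ts.1 : ℝ)) * (ψ₁ ts.2) + ts.1 * (ψ₂ ts.2), hmem ts⟩, by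
      apply Continuous.subtype_mk
      fun_prop⟩
  refine ⟨⟨⟨γ.toContinuousMap.comp Φ, ?_, ?_⟩, ?_⟩⟩
  · intro s
    show γ (Φ (0, s)) = p.toContinuousMap s
    rw [show p.toContinuousMap s = p s from rfl, hp s]
    exact congrArg γ (Subtype.ext (by simp [Φ]))
  · intro s
    show γ (Φ (1, s)) = q.toContinuousMap s
    rw [show q.toContinuousMap s = q s from rfl, hq s]
    exact congrArg γ (Subtype.ext (by simp [Φ]))
  · intro t s hs
    rcases hs with hs | hs
    · subst hs
      show γ (Φ (t, 0)) = p.toContinuousMap 0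
      rw [show p.toContinuousMap 0 = p 0 from rfl, hp 0]
      refine congrArg γ (Subtype.ext ?_)
      have h : (ψ₁ 0 : ℝ) = ψ₂ 0 := by rw [h0]
      show (1 - (t : ℝ)) * (ψ₁ 0) + t * (ψ₂ 0) = (ψ₁ 0 : ℝ)
      rw [← h]; ring
    · simp only [Set.mem_singleton_iff] at hs
      subst hs
      show γ (Φ (t, 1)) = p.toContinuousMap 1
      rw [show p.toContinuousMap 1 = p 1 from rfl, hp 1]
      refine congrArg γ (Subtype.ext ?_)
      have h : (ψ₁ 1 : ℝ) = ψ₂ 1 := by rw [h1]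
      show (1 - (t : ℝ)) * (ψ₁ 1) + t * (ψ₂ 1) = (ψ₁ 1 : ℝ)
      rw [← h]; ring


/-- Splitting a subpath at an intermediate point, up to homotopy. -/
lemma TTM.seg_trans_homotopic {a b : Y} (γ : Path a b) {u v w : I}
    (huv : u ≤ v) (hvw : v ≤ w) :
    (TTM.seg γ u w).Homotopic ((TTM.seg γ u v).trans (TTM.seg γ v w)) := by
  have huv' : (u:ℝ) ≤ v := huv
  have hvw' : (v:ℝ) ≤ w := hvw
  have hmem : ∀ s : I, (u : ℝ) + min (2 * (s:ℝ)) 1 * (v - u) + max (2 * (s:ℝ) - 1) 0 * (w - v)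
      ∈ Set.Icc (0:ℝ) 1 := by
    intro s
    have h1 : (0:ℝ) ≤ min (2 * (s:ℝ)) 1 := le_min (by nlinarith [s.2.1]) one_pos.le
    have h2 : min (2 * (s:ℝ)) 1 ≤ 1 := min_le_right _ _
    have h3 : (0:ℝ) ≤ max (2 * (s:ℝ) - 1) 0 := le_max_right _ _
    have h4 : max (2 * (s:ℝ) - 1) 0 ≤ 1 := max_le (by nlinarith [s.2.2]) one_pos.le
    constructor
    · nlinarith [u.2.1]
    · nlinarith [w.2.2]
  let ψ₂ : C(I, I) := ⟨fun s =>
      ⟨(u : ℝ) + min (2 * (s:ℝ)) 1 * (v - u) + max (2 * (s:ℝ) - 1) 0 * (w - v), hmem s⟩, by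
    apply Continuous.subtype_mk
    fun_prop⟩
  refine TTM.homotopic_of_comp (p := TTM.seg γ u w)
      (q := (TTM.seg γ u v).trans (TTM.seg γ v w)) γ (TTM.segMap u w) ψ₂ (fun s => rfl) ?_ ?_ ?_
  · intro s
    rw [Path.trans_apply]
    split_ifs with h
    · show γ _ = γ _
      refine congrArg γ (Subtype.ext ?_)
      show (1 - (2*(s:ℝ))) * u + (2*(s:ℝ)) * v = (u:ℝ) + _ * (v - u) + _ * (w - v)
      rw [min_eq_left (by linarith), max_eq_right (by linarith)]
      ring
    · show γ _ = γ _
      refine congrArg γ (Subtype.ext ?_)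
      show (1 - (2*(s:ℝ) - 1)) * v + (2*(s:ℝ) - 1) * w = (u:ℝ) + _ * (v - u) + _ * (w - v)
      rw [min_eq_right (by linarith), max_eq_left (by linarith)]
      ring
  · exact Subtype.ext (by norm_num [ψ₂])
  · exact Subtype.ext (by norm_num [ψ₂])

/-- Two paths with values in a simply connected subset are homotopic. -/
lemma TTM.homotopic_in {V : Set Y} (hV : SimplyConnectedSpace V) {x y : Y}
    (p q : Path x y) (hp : ∀ s, p s ∈ V) (hq : ∀ s, q s ∈ V) : p.Homotopic q := by
  have hx : x ∈ V := p.source ▸ hp 0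
  have hy : y ∈ V := p.target ▸ hp 1
  let p' : Path (⟨x, hx⟩ : V) ⟨y, hy⟩ :=
    ⟨⟨fun s => ⟨p s, hp s⟩, (p.continuous.subtype_mk _)⟩,
      Subtype.ext p.source, Subtype.ext p.target⟩
  let q' : Path (⟨x, hx⟩ : V) ⟨y, hy⟩ :=
    ⟨⟨fun s => ⟨q s, hq s⟩, (q.continuous.subtype_mk _)⟩,
      Subtype.ext q.source, Subtype.ext q.target⟩
  have h := SimplyConnectedSpace.paths_homotopic (X := V) p' q'
  have h2 := h.map ⟨Subtype.val, continuous_subtype_val⟩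
  have e1 : p'.map continuous_subtype_val = p := by ext s; rfl
  have e2 : q'.map continuous_subtype_val = q := by ext s; rfl
  rw [e1, e2] at h2
  exact h2

lemma TTM.cast_homotopic {x y x' y' : Y} {p q : Path x y} (h : p.Homotopic q)
    (hx : x' = x) (hy : y' = y) : (p.cast hx hy).Homotopic (q.cast hx hy) := by
  subst hx; subst hy; exact h

lemma TTM.cast_trans_left {x' a b c : Y} (p : Path a b) (q : Path b c) (hx : x' = a) :
    (p.trans q).cast hx rfl = (p.cast hx rfl).trans q := by
  subst hx; rfl


open CategoryTheory in
theorem TTM.simplyConnected_of_cover {Y : Type*} [TopologicalSpace Y] {ι : Type*}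
    (U : ι → Set Y) (hU : ∀ i, IsOpen (U i)) (hsc : ∀ i, SimplyConnectedSpace (U i))
    (x₀ : Y) (hx₀ : ∀ i, x₀ ∈ U i) (hcov : ∀ x : Y, ∃ i, x ∈ U i)
    (hjoin : ∀ i j (x : Y), x ∈ U i → x ∈ U j → JoinedIn (U i ∩ U j) x x₀) :
    SimplyConnectedSpace Y := by
  have hjd : ∀ x : Y, Joined x₀ x := by
    intro x
    obtain ⟨i, hx⟩ := hcov x
    exact ((hjoin i i x hx hx).joined).symm
  haveI pc : PathConnectedSpace Y := ⟨⟨x₀⟩, fun x y => (hjd x).symm.trans (hjd y)⟩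
  have hloop : ∀ γ : Path x₀ x₀, γ.Homotopic (Path.refl x₀) := by
    intro γ
    obtain ⟨t, ht0, hmono, ⟨m, hm⟩, hpiece⟩ :=
      exists_monotone_Icc_subset_open_cover_unitInterval
        (c := fun i => γ ⁻¹' (U i)) (fun i => (hU i).preimage γ.continuous)
        (fun s _ => Set.mem_iUnion.mpr (hcov (γ s)))
    choose idx hidx using hpiece
    have key : ∀ k (c : Path x₀ (γ (t k))), (∀ s, c s ∈ U (idx k)) →
        ((TTM.seg γ 0 (t k)).cast γ.source.symm rfl).Homotopic c := by
      intro k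
      induction k with
      | zero =>
        intro c hc
        refine TTM.homotopic_in (hsc (idx 0)) _ _ ?_ hc
        intro s
        show (TTM.seg γ 0 (t 0)) s ∈ U (idx 0)
        rw [TTM.seg_apply]
        refine hidx 0 ⟨?_, ?_⟩
        · show (t 0 : ℝ) ≤ (1 - (s:ℝ)) * ((0:I):ℝ) + s * (t 0)
          have h0 : (t 0 : ℝ) = 0 := by rw [ht0]; rfl
          simp [h0]
        · show ((1 - (s:ℝ)) * ((0:I):ℝ) + s * (t 0) : ℝ) ≤ t 1
          have h0 : (t 0 : ℝ) = 0 := by rw [ht0]; rfl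
          have h1 := (t 1).2.1
          simp [h0, h1]
      | succ k ih =>
        intro c hc
        have h0k : (0:I) ≤ t k := unitInterval.nonneg'
        have hk1 : t k ≤ t (k+1) := hmono (Nat.le_succ k)
        have hk2 : t (k+1) ≤ t (k+2) := hmono (Nat.le_succ _)
        have hsplit := TTM.seg_trans_homotopic γ h0k hk1
        have hsplit' := TTM.cast_homotopic hsplit γ.source.symm rfl
        rw [TTM.cast_trans_left] at hsplit'
        have hγtk : γ (t k) ∈ U (idx k) := hidx k ⟨le_rfl, hk1⟩
        have hγtk1L : γ (t (k+1)) ∈ U (idx k) := hidx k ⟨hk1, le_rfl⟩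
        have hγtk1R : γ (t (k+1)) ∈ U (idx (k+1)) := hidx (k+1) ⟨le_rfl, hk2⟩
        obtain ⟨cp, hcp⟩ := (hjoin (idx k) (idx k) (γ (t k)) hγtk hγtk).symm
        have hcpU : ∀ s, cp s ∈ U (idx k) := fun s => (hcp s).1
        have hIH := ih cp hcpU
        obtain ⟨d, hd⟩ := (hjoin (idx k) (idx (k+1)) (γ (t (k+1))) hγtk1L hγtk1R).symm
        have hstep1 : ((TTM.seg γ 0 (t (k+1))).cast γ.source.symm rfl).Homotopic
            (cp.trans (TTM.seg γ (t k) (t (k+1)))) :=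
          hsplit'.trans (Path.Homotopic.hcomp hIH (Path.Homotopic.refl _))
        have htransU : ∀ s, (cp.trans (TTM.seg γ (t k) (t (k+1)))) s ∈ U (idx k) := by
          intro s
          have hmem : (cp.trans (TTM.seg γ (t k) (t (k+1)))) s ∈
              Set.range cp ∪ Set.range (TTM.seg γ (t k) (t (k+1))) := by
            rw [← Path.trans_range]; exact Set.mem_range_self s
          rcases hmem with ⟨s', hs'⟩ | ⟨s', hs'⟩
          · rw [← hs']; exact hcpU s'
          · rw [← hs']
            exact hidx k (TTM.segMap_mem_Icc hk1 s')
        have hA1 : (cp.trans (TTM.seg γ (t k) (t (k+1)))).Homotopic d :=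
          TTM.homotopic_in (hsc (idx k)) _ _ htransU (fun s => (hd s).1)
        have hA2 : d.Homotopic c := TTM.homotopic_in (hsc (idx (k+1))) _ _ (fun s => (hd s).2) hc
        exact hstep1.trans (hA1.trans hA2)
    have hm1 : t m = 1 := hm m le_rfl
    have hend : γ (t m) = x₀ := by rw [hm1]; exact γ.target
    have hc : ∀ s, ((Path.refl x₀).cast rfl hend) s ∈ U (idx m) := by
      intro s
      show (Path.refl x₀) s ∈ U (idx m)
      exact hx₀ (idx m)
    have H := key m ((Path.refl x₀).cast rfl hend) hc
    have H2 := TTM.cast_homotopic H rfl hend.symm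
    have e1 : (((TTM.seg γ 0 (t m)).cast γ.source.symm rfl).cast rfl hend.symm) = γ := by
      ext s
      show γ (TTM.segMap 0 (t m) s) = γ s
      refine congrArg γ (Subtype.ext ?_)
      have h1 : (t m : ℝ) = 1 := by rw [hm1]; rfl
      show ((1 - (s:ℝ)) * ((0:I):ℝ) + s * (t m) : ℝ) = s
      simp [h1]
    have e2 : (((Path.refl x₀).cast rfl hend).cast rfl hend.symm) = Path.refl x₀ := by
      ext s; rfl
    rw [e1, e2] at H2
    exact H2
  rw [simply_connected_iff_paths_homotopic']
  refine ⟨pc, ?_⟩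
  intro x y p q
  have hend : ∀ f : (FundamentalGroupoid.mk x₀ ⟶ FundamentalGroupoid.mk x₀), f = 𝟙 _ := by
    intro f
    refine Quotient.inductionOn f ?_
    intro γ
    rw [FundamentalGroupoid.id_eq_path_refl]
    exact Quotient.sound (hloop γ)
  let a : FundamentalGroupoid.mk x₀ ⟶ FundamentalGroupoid.mk x := ⟦(hjd x).somePath⟧
  let f : FundamentalGroupoid.mk x ⟶ FundamentalGroupoid.mk y := ⟦p⟧
  let g : FundamentalGroupoid.mk x ⟶ FundamentalGroupoid.mk y := ⟦q⟧
  have h1 : (a ≫ f) ≫ Groupoid.inv (a ≫ g) = 𝟙 _ := hend _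
  have h2 : a ≫ f = a ≫ g := by
    calc a ≫ f = ((a ≫ f) ≫ Groupoid.inv (a ≫ g)) ≫ (a ≫ g) := by
          rw [Category.assoc, Groupoid.inv_comp, Category.comp_id]
    _ = a ≫ g := by rw [h1, Category.id_comp]
  have h3 : f = g := by
    have h4 := congrArg (fun z => Groupoid.inv a ≫ z) h2
    simp only [← Category.assoc, Groupoid.inv_comp, Category.id_comp] at h4
    exact h4
  exact Quotient.exact h3

end Aux

/-- a topological toric manifold is simply connected. -/
theorem topToricManifold_simplyConnected (n : ℕ) (M : TopToricManifold n) :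
    @SimplyConnectedSpace M.X M.ts := by
  letI := M.ts
  letI := M.t2
  letI := M.cpt
  obtain ⟨x₀, hdense⟩ := M.denseOrbit
  -- the orbit of x₀
  set O : Set M.X := Set.range fun g => M.smul g x₀ with hO
  have hx₀O : x₀ ∈ O := ⟨1, M.one_smul x₀⟩
  -- every chart contains the whole orbit
  have horb : ∀ i, O ⊆ M.U i := by
    intro i
    obtain ⟨α, e, he⟩ := M.charts i
    have hne : (M.U i).Nonempty := ⟨(e.symm 0 : M.U i), (e.symm 0).2⟩
    obtain ⟨z, hzO, hzU⟩ := hdense.exists_mem_open (M.isOpen_U i) hne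
    obtain ⟨g, rfl⟩ := hzO
    rintro _ ⟨h, rfl⟩
    have hh : M.smul h x₀ = M.smul (h * g⁻¹) (M.smul g x₀) := by
      rw [← M.mul_smul]
      congr 1
      exact (inv_mul_cancel_right h g).symm
    show M.smul h x₀ ∈ M.U i
    rw [hh]
    exact M.invariant_U i _ _ hzU
  have hx₀U : ∀ i, x₀ ∈ M.U i := fun i => horb i hx₀O
  -- ℂˣ is path connected
  let eu : ℂ → ℂˣ := fun z =>
    ⟨Complex.exp z, Complex.exp (-z), by rw [← Complex.exp_add]; simp, by
      rw [← Complex.exp_add]; simp⟩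
  have heucont : Continuous eu := by
    rw [Units.continuous_iff]
    exact ⟨Complex.continuous_exp, by
      show Continuous fun z : ℂ => Complex.exp (-z)
      fun_prop⟩
  have heusurj : Function.Surjective eu := by
    intro u
    refine ⟨Complex.log u.val, Units.ext ?_⟩
    exact Complex.exp_log u.ne_zero
  haveI hpcu : PathConnectedSpace ℂˣ := heusurj.pathConnectedSpace heucont
  haveI hpct : PathConnectedSpace (Fin n → ℂˣ) := by
    refine Function.Surjective.pathConnectedSpace (X := Fin n → ℂ)
      (f := fun z k => eu (z k)) ?_ ?_
    · intro u
      choose z hz using fun k => heusurj (u k)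
      exact ⟨z, funext hz⟩
    · exact continuous_pi fun k => heucont.comp (continuous_apply k)
  -- the orbit is path connected
  have hOpc : IsPathConnected O :=
    isPathConnected_range (M.continuous_smul.comp (continuous_id.prodMk continuous_const))
  -- charts are simply connected
  have hsc : ∀ i, SimplyConnectedSpace (M.U i) := by
    intro i
    obtain ⟨α, e, he⟩ := M.charts i
    haveI := e.contractibleSpace
    infer_instance
  -- intersections of charts are joined to the basepoint
  have hjoin : ∀ i j (x : M.X), x ∈ M.U i → x ∈ M.U j →
      JoinedIn (M.U i ∩ M.U j) x x₀ := by
    intro i j x hxi hxj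
    obtain ⟨α, e, he⟩ := M.charts i
    set A : Set (M.U i) := Subtype.val ⁻¹' (M.U j) with hA
    have hAopen : IsOpen A := (M.isOpen_U j).preimage continuous_subtype_val
    have hWopen : IsOpen (e.symm ⁻¹' A) := hAopen.preimage e.symm.continuous
    have hmemW : e ⟨x, hxi⟩ ∈ e.symm ⁻¹' A := by
      show e.symm (e ⟨x, hxi⟩) ∈ A
      rw [e.symm_apply_apply]
      exact hxj
    obtain ⟨r, hr, hball⟩ := Metric.isOpen_iff.mp hWopen _ hmemW
    set c0 : Fin n → ℂ := e ⟨x, hxi⟩ with hc0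
    have hop : IsOpen (Subtype.val '' (e.symm '' Metric.ball c0 r)) :=
      (M.isOpen_U i).isOpenMap_subtype_val _ (e.symm.isOpenMap _ Metric.isOpen_ball)
    have hne : (Subtype.val '' (e.symm '' Metric.ball c0 r)).Nonempty :=
      ⟨_, Set.mem_image_of_mem _ (Set.mem_image_of_mem _ (Metric.mem_ball_self hr))⟩
    obtain ⟨w, hwO, hwmem⟩ := hdense.exists_mem_open hop hne
    obtain ⟨w1, hw1, rfl⟩ := hwmem
    obtain ⟨b, hbball, rfl⟩ := hw1
    -- the straight segment from c0 to b stays in the ball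
    let σ : Path c0 b :=
      ⟨⟨fun s => (1 - (s:ℝ)) • c0 + (s:ℝ) • b, by fun_prop⟩, by simp, by simp⟩
    have hσball : ∀ s, σ s ∈ Metric.ball c0 r := by
      intro s
      rw [Metric.mem_ball, dist_eq_norm]
      have key : (1 - (s:ℝ)) • c0 + (s:ℝ) • b - c0 = (s:ℝ) • (b - c0) := by
        rw [sub_smul, one_smul, smul_sub]
        abel
      show ‖(1 - (s:ℝ)) • c0 + (s:ℝ) • b - c0‖ < r
      rw [key, norm_smul]
      have hb' : ‖b - c0‖ < r := by
        rw [← dist_eq_norm]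
        exact Metric.mem_ball.mp hbball
      calc ‖(s:ℝ)‖ * ‖b - c0‖ ≤ 1 * ‖b - c0‖ := by
            apply mul_le_mul_of_nonneg_right _ (norm_nonneg _)
            rw [Real.norm_of_nonneg s.2.1]
            exact s.2.2
      _ = ‖b - c0‖ := one_mul _
      _ < r := hb'
    have hx' : x = ↑(e.symm c0) := by rw [hc0, e.symm_apply_apply]
    let θ : Path x ↑(e.symm b) :=
      ((σ.map e.symm.continuous).map continuous_subtype_val).cast hx' rfl
    have hθmem : ∀ s, θ s ∈ M.U i ∩ M.U j := by
      intro s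
      show ↑(e.symm (σ s)) ∈ M.U i ∩ M.U j
      exact ⟨(e.symm (σ s)).2, hball (hσball s)⟩
    have hJ2 : JoinedIn O (↑(e.symm b)) x₀ := hOpc.joinedIn _ hwO _ hx₀O
    exact JoinedIn.trans ⟨θ, hθmem⟩ (hJ2.mono (Set.subset_inter (horb i) (horb j)))
  exact TTM.simplyConnected_of_cover M.U M.isOpen_U hsc x₀ hx₀U M.cover_U hjoin

end
end

section
/- The quotient space X(Δ) = U(Σ)/Ker λ associated to a complete non-singular topological fan Δ is Hausdorff. -/
noncomputable section

open Complex Finset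

/-- The cone spanned by the vectors `b i`, `i ∈ I`. -/
def coneOf {n : ℕ} (m : ℕ) (b : Fin m → (Fin n → ℝ)) (I : Finset (Fin m)) :
    Set (Fin n → ℝ) :=
  {x | ∃ r : Fin m → ℝ, (∀ i, 0 ≤ r i) ∧ (∀ i ∉ I, r i = 0) ∧ x = ∑ i, r i • b i}

/-- A complete non-singular (simplicial) topological fan of dimension `n` on the vertex set
`[m]`: an abstract simplicial complex `cx` on `Fin m` together with
`β : Fin m → 𝓡ⁿ = ℂⁿ × ℤⁿ`, `β i = (bᵢ + i·cᵢ, vᵢ)` (encoded componentwise by triples in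
`ℝ × ℝ × ℤ`), such that the cones `∠b_I`, `I ∈ cx`, form a complete ordinary simplicial fan
and each `{vᵢ}_{i ∈ I}` is part of a `ℤ`-basis of `ℤⁿ` (rows of a unimodular matrix). -/
structure CompleteNonsingularTopFan (n m : ℕ) where
  cx : Finset (Finset (Fin m))
  β : Fin m → Fin n → ℝ × ℝ × ℤ
  down_closed : ∀ I ∈ cx, ∀ J ⊆ I, J ∈ cx
  vertices : ∀ i : Fin m, {i} ∈ cx
  indep : ∀ I ∈ cx, LinearIndependent ℝ (fun i : I => fun k => (β i k).1)
  cone_inter : ∀ I ∈ cx, ∀ J ∈ cx,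
    coneOf m (fun i k => (β i k).1) I ∩ coneOf m (fun i k => (β i k).1) J =
      coneOf m (fun i k => (β i k).1) (I ∩ J)
  complete : (⋃ I ∈ cx, coneOf m (fun i k => (β i k).1) I) = Set.univ
  nonsingular : ∀ I ∈ cx, ∃ (C : Matrix (Fin n) (Fin n) ℤ) (ρ : Fin m → Fin n),
    IsUnit C.det ∧ Set.InjOn ρ (I : Set (Fin m)) ∧ ∀ i ∈ I, ∀ k, C (ρ i) k = (β i k).2.2

/-- The homomorphism `λ : (ℂ*)ᵐ → (ℂ*)ⁿ`, `λ(h₁,…,hₘ) = ∏ₖ λ_{βₖ}(hₖ)`, written on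
`j`-th coordinates: `λ(h)ⱼ = ∏ₖ hₖ^{βₖʲ}`. -/
noncomputable def lamMap {n m : ℕ} (β : Fin m → Fin n → ℝ × ℝ × ℤ) (h : Fin m → ℂ) :
    Fin n → ℂ :=
  fun j => ∏ k, cpwT (β k j) (h k)

/-- `U(Σ) = ⋃_{I ∈ Σ} U(I) ⊆ ℂᵐ`. -/
def USigma {n m : ℕ} (Δ : CompleteNonsingularTopFan n m) : Set (Fin m → ℂ) :=
  ⋃ I ∈ Δ.cx, {z : Fin m → ℂ | ∀ k ∉ I, z k ≠ 0}

/-- The relation on `U(Σ)` identifying points in the same `Ker λ`-orbit; the quotient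
`Quot (orbitRel Δ)` is the space `X(Δ) = U(Σ)/Ker λ` with the quotient topology. -/
def orbitRel {n m : ℕ} (Δ : CompleteNonsingularTopFan n m)
    (z w : USigma Δ) : Prop :=
  ∃ h : Fin m → ℂ, (∀ k, h k ≠ 0) ∧ (lamMap Δ.β h = fun _ => 1) ∧
    ∀ k, (w : Fin m → ℂ) k = h k * (z : Fin m → ℂ) k


namespace XD

lemma cpw_exp (b c : ℝ) (v : ℤ) (s θ : ℝ) :
    cpw b c v (Complex.exp (↑s + ↑θ * I)) =
      Complex.exp (↑(s*b) + ↑(s*c + θ*v) * I) := by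
  have h0 : ‖Complex.exp (↑s + ↑θ * I)‖ = Real.exp s := by
    rw [Complex.norm_exp]; simp
  rw [cpw, h0]
  have h1 : ((Real.exp s : ℝ) : ℂ) = Complex.exp (s : ℂ) := by
    rw [Complex.ofReal_exp]
  rw [h1]
  have h2 : Complex.exp (↑s + ↑θ * I) / Complex.exp (s:ℂ) = Complex.exp (↑θ * I) := by
    rw [← Complex.exp_sub]; ring_nf
  rw [h2]
  have h3 : (Complex.exp (↑s : ℂ)) ^ ((b:ℂ) + c*I) = Complex.exp ((↑s) * ((b:ℂ)+c*I)) := by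
    rw [Complex.cpow_def_of_ne_zero (Complex.exp_ne_zero _), Complex.log_exp]
    · simpa using Real.pi_pos
    · simpa using Real.pi_pos.le
  rw [h3, ← Complex.exp_int_mul, ← Complex.exp_add]
  congr 1
  push_cast
  ring

lemma exp_form {g : ℂ} (hg : g ≠ 0) :
    g = Complex.exp (↑(Real.log (‖g‖)) + ↑(Complex.arg g) * I) := by
  rw [Complex.exp_add, ← Complex.ofReal_exp, Real.exp_log (norm_pos_iff.mpr hg)]
  exact (Complex.norm_mul_exp_arg_mul_I g).symm

lemma cpw_triv (g : ℂ) : cpw 0 0 0 g = 1 := by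
  rw [cpw]
  norm_num

lemma cpw_zero_val (b c : ℝ) (v : ℤ) (h : ¬(b = 0 ∧ c = 0 ∧ v = 0)) : cpw b c v 0 = 0 := by
  rw [cpw]
  simp only [norm_zero, Complex.ofReal_zero, zero_div]
  by_cases hbc : (b:ℂ) + (c:ℂ) * I = 0
  · have hb : b = 0 ∧ c = 0 := by
      constructor
      · have := congrArg Complex.re hbc; simpa using this
      · have := congrArg Complex.im hbc; simpa using this
    have hv : v ≠ 0 := fun hv => h ⟨hb.1, hb.2, hv⟩
    rw [zero_zpow v hv, mul_zero]
  · rw [Complex.zero_cpow hbc, zero_mul]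

lemma cpw_mul (b c : ℝ) (v : ℤ) {g' g : ℂ} (h' : g' ≠ 0) :
    cpw b c v (g' * g) = cpw b c v g' * cpw b c v g := by
  by_cases hg : g = 0
  · subst hg
    rw [mul_zero]
    by_cases htriv : b = 0 ∧ c = 0 ∧ v = 0
    · obtain ⟨rfl, rfl, rfl⟩ := htriv; simp [cpw_triv]
    · rw [cpw_zero_val _ _ _ htriv, mul_zero]
  · rw [exp_form h', exp_form hg, ← Complex.exp_add]
    have e1 : (↑(Real.log (‖g'‖)) + ↑(Complex.arg g') * I) +
        (↑(Real.log (‖g‖)) + ↑(Complex.arg g) * I) =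
        ↑(Real.log (‖g'‖) + Real.log (‖g‖)) +
          ↑(Complex.arg g' + Complex.arg g) * I := by push_cast; ring
    rw [e1, cpw_exp, cpw_exp, cpw_exp, ← Complex.exp_add]
    congr 1
    push_cast
    ring

lemma exp_I_eq_one_iff (r : ℝ) :
    Complex.exp (↑r * I) = 1 ↔ ∃ nn : ℤ, r = 2 * Real.pi * nn := by
  rw [Complex.exp_eq_one_iff]
  constructor
  · rintro ⟨nn, hnn⟩
    refine ⟨nn, ?_⟩
    have := congrArg Complex.im hnn
    simp at this
    linarith
  · rintro ⟨nn, rfl⟩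
    exact ⟨nn, by push_cast; ring⟩


variable {m : ℕ}

/-- radial function: `∏ₖ |xₖ| ^ max (t k) 0`. -/
noncomputable def PF (t : Fin m → ℝ) (x : Fin m → ℂ) : ℝ :=
  ∏ k, (‖x k‖) ^ (max (t k) 0)

lemma PF_nonneg (t : Fin m → ℝ) (x : Fin m → ℂ) : 0 ≤ PF t x :=
  Finset.prod_nonneg fun _ _ => Real.rpow_nonneg (norm_nonneg _) _

lemma PF_pos {t : Fin m → ℝ} {x : Fin m → ℂ} (h : ∀ k, x k = 0 → t k ≤ 0) :
    0 < PF t x := by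
  apply Finset.prod_pos
  intro k _
  by_cases hx : x k = 0
  · rw [hx]
    simp [max_eq_right (h k hx)]
  · exact Real.rpow_pos_of_pos (norm_pos_iff.mpr hx) _

lemma PF_zero {t : Fin m → ℝ} {x : Fin m → ℂ} (k : Fin m) (hx : x k = 0) (ht : 0 < t k) :
    PF t x = 0 := by
  apply Finset.prod_eq_zero (Finset.mem_univ k)
  rw [hx]
  simp only [norm_zero]
  exact Real.zero_rpow (by positivity)

lemma PF_mul (t : Fin m → ℝ) (h x : Fin m → ℂ) :
    PF t (fun k => h k * x k) = PF t h * PF t x := by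
  rw [PF, PF, PF, ← Finset.prod_mul_distrib]
  congr 1; funext k
  rw [norm_mul]
  exact Real.mul_rpow (norm_nonneg _) (norm_nonneg _)

lemma PF_exp (t s θ : Fin m → ℝ) :
    PF t (fun k => Complex.exp (↑(s k) + ↑(θ k) * I)) = Real.exp (∑ k, s k * max (t k) 0) := by
  rw [PF, Real.exp_sum]
  apply Finset.prod_congr rfl
  intro k _
  rw [Complex.norm_exp]
  have h : (↑(s k) + ↑(θ k) * I).re = s k := by simp
  rw [h, Real.rpow_def_of_pos (Real.exp_pos (s k)), Real.log_exp]

/-- value of PF at a point whose zero coordinates are exactly `S`. -/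
lemma PF_eq_exp_on (t : Fin m → ℝ) (x : Fin m → ℂ) (S : Finset (Fin m))
    (hzero : ∀ k, x k = 0 ↔ k ∈ S) (hS : ∀ k ∈ S, max (t k) 0 = 0) :
    PF t x = Real.exp (∑ k ∈ Sᶜ, Real.log (‖x k‖) * max (t k) 0) := by
  rw [PF, Real.exp_sum, ← Finset.prod_compl_mul_prod S]
  have h2 : ∏ k ∈ S, (‖x k‖) ^ (max (t k) 0) = 1 := by
    apply Finset.prod_eq_one
    intro k hk
    rw [hS k hk, Real.rpow_zero]
  rw [h2, mul_one]
  apply Finset.prod_congr rfl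
  intro k hk
  rw [Finset.mem_compl] at hk
  have hx : x k ≠ 0 := fun h => hk ((hzero k).1 h)
  rw [Real.rpow_def_of_pos (norm_pos_iff.mpr hx), mul_comm]

lemma PF_continuous (t : Fin m → ℝ) : Continuous (PF t) := by
  apply continuous_finset_prod
  intro k _
  have h1 : Continuous fun x : Fin m → ℂ => ‖x k‖ :=
    continuous_norm.comp (continuous_apply k)
  have h2 : Continuous fun y : ℝ => y ^ (max (t k) 0) := by
    rw [continuous_iff_continuousAt]
    intro y
    exact Real.continuousAt_rpow_const y _ (Or.inr (le_max_right _ _))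
  exact h2.comp h1

/-- phase function: `∏ₖ cpw 0 (d k) (e k) (x k)`. -/
noncomputable def GF (d : Fin m → ℝ) (e : Fin m → ℤ) (x : Fin m → ℂ) : ℂ :=
  ∏ k, cpw 0 (d k) (e k) (x k)

lemma GF_mul (d : Fin m → ℝ) (e : Fin m → ℤ) {h : Fin m → ℂ} (x : Fin m → ℂ)
    (h0 : ∀ k, h k ≠ 0) :
    GF d e (fun k => h k * x k) = GF d e h * GF d e x := by
  rw [GF, GF, GF, ← Finset.prod_mul_distrib]
  exact Finset.prod_congr rfl fun k _ => cpw_mul _ _ _ (h0 k)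

lemma cpw0_exp (c : ℝ) (v : ℤ) (s θ : ℝ) :
    cpw 0 c v (Complex.exp (↑s + ↑θ * I)) = Complex.exp (↑(s * c + θ * v) * I) := by
  rw [cpw_exp]
  norm_num

lemma GF_val (d : Fin m → ℝ) (e : Fin m → ℤ) (x : Fin m → ℂ) (S : Finset (Fin m))
    (hx : ∀ k ∉ S, x k ≠ 0) (hd : ∀ k ∈ S, d k = 0) (he : ∀ k ∈ S, e k = 0) :
    GF d e x = Complex.exp
      (↑(∑ k ∈ Sᶜ, (Real.log (‖x k‖) * d k + Complex.arg (x k) * e k)) * I) := by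
  rw [GF, ← Finset.prod_compl_mul_prod S]
  have h2 : ∏ k ∈ S, cpw 0 (d k) (e k) (x k) = 1 := by
    apply Finset.prod_eq_one
    intro k hk
    rw [hd k hk, he k hk]
    exact cpw_triv _
  have h3 : ∀ k ∈ Sᶜ, cpw 0 (d k) (e k) (x k) =
      Complex.exp (↑(Real.log (‖x k‖) * d k + Complex.arg (x k) * e k) * I) := by
    intro k hk
    rw [Finset.mem_compl] at hk
    conv_lhs => rw [exp_form (hx k hk)]
    rw [cpw0_exp]
  rw [h2, mul_one, Finset.prod_congr rfl h3, ← Complex.exp_sum]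
  congr 1
  rw [Complex.ofReal_sum, Finset.sum_mul]

lemma GF_all_exp (d : Fin m → ℝ) (e : Fin m → ℤ) (s θ : Fin m → ℝ) :
    GF d e (fun k => Complex.exp (↑(s k) + ↑(θ k) * I)) =
      Complex.exp (↑(∑ k, (s k * d k + θ k * e k)) * I) := by
  rw [GF]
  have h3 : ∀ k ∈ Finset.univ, cpw 0 (d k) (e k) (Complex.exp (↑(s k) + ↑(θ k) * I)) =
      Complex.exp (↑(s k * d k + θ k * e k) * I) := fun k _ => cpw0_exp _ _ _ _
  rw [Finset.prod_congr rfl h3, ← Complex.exp_sum]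
  congr 1
  rw [Complex.ofReal_sum, Finset.sum_mul]

lemma cpw_continuousAt (b c : ℝ) (v : ℤ) {g : ℂ} (hg : g ≠ 0) :
    ContinuousAt (cpw b c v) g := by
  have habs : ContinuousAt (fun y : ℂ => ((‖y‖ : ℝ) : ℂ)) g :=
    (Complex.continuous_ofReal.comp continuous_norm).continuousAt
  have h1 : ContinuousAt (fun y : ℂ => ((‖y‖ : ℝ) : ℂ) ^ ((b : ℂ) + (c : ℂ) * I)) g := by
    apply ContinuousAt.cpow habs continuousAt_const
    left
    simpa using norm_pos_iff.mpr hg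
  have hd : ContinuousAt (fun y : ℂ => y / ((‖y‖ : ℝ) : ℂ)) g := by
    apply ContinuousAt.div continuousAt_id habs
    simpa using hg
  have h2 : ContinuousAt (fun y : ℂ => (y / ((‖y‖ : ℝ) : ℂ)) ^ v) g := by
    apply ContinuousAt.zpow₀ hd
    left
    apply div_ne_zero hg
    simpa using hg
  exact h1.mul h2

lemma GF_continuousOn (d : Fin m → ℝ) (e : Fin m → ℤ) (S : Finset (Fin m))
    (hd : ∀ k ∈ S, d k = 0) (he : ∀ k ∈ S, e k = 0) :
    ContinuousOn (GF d e) {x : Fin m → ℂ | ∀ k ∉ S, x k ≠ 0} := by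
  apply continuousOn_finset_prod
  intro k _
  by_cases hk : k ∈ S
  · have h : (fun x : Fin m → ℂ => cpw 0 (d k) (e k) (x k)) = fun _ => 1 := by
      funext x
      rw [hd k hk, he k hk]
      exact cpw_triv _
    rw [h]
    exact continuousOn_const
  · intro x hx
    apply ContinuousAt.continuousWithinAt
    have hc : ContinuousAt (fun p : Fin m → ℂ => p k) x := (continuous_apply k).continuousAt
    exact ContinuousAt.comp (f := fun p : Fin m → ℂ => p k) (cpw_continuousAt _ _ _ (hx k hk)) hc

/-! ### Linear algebra helpers -/

def dotp {n : ℕ} (a x : Fin n → ℝ) : ℝ := ∑ j, a j * x j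

lemma dotp_neg {n : ℕ} (a x : Fin n → ℝ) : dotp (-a) x = -dotp a x := by
  rw [dotp, dotp, ← Finset.sum_neg_distrib]
  apply Finset.sum_congr rfl
  intro j _
  simp

lemma exists_dotp_linear {n : ℕ} (F : (Fin n → ℝ) →ₗ[ℝ] ℝ) :
    ∃ a : Fin n → ℝ, ∀ x, dotp a x = F x := by
  classical
  refine ⟨fun j => F (fun j' => if j = j' then 1 else 0), fun x => ?_⟩
  conv_rhs => rw [pi_eq_sum_univ x, map_sum]
  rw [dotp]
  apply Finset.sum_congr rfl
  intro j _
  rw [map_smul]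
  rw [smul_eq_mul, mul_comm]

/-- dual vectors for a finite linearly independent family. -/
lemma exists_dual_vector {n : ℕ} {ι : Type*} [Fintype ι] (y : ι → Fin n → ℝ)
    (hli : LinearIndependent ℝ y) (t : ι → ℝ) :
    ∃ a : Fin n → ℝ, ∀ l, dotp a (y l) = t l := by
  classical
  have hinj : Function.Injective y := hli.injective
  have hs : LinearIndepOn ℝ id (Set.range y) := (linearIndepOn_id_range_iff hinj).mpr hli
  let B := Module.Basis.extend hs
  let tv : (Fin n → ℝ) → ℝ := fun v => if h : ∃ l, y l = v then t h.choose else 0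
  let F : (Fin n → ℝ) →ₗ[ℝ] ℝ := B.constr ℝ (fun i => tv ↑i)
  obtain ⟨a, ha⟩ := exists_dotp_linear F
  refine ⟨a, fun l => ?_⟩
  rw [ha]
  have hmem : y l ∈ hs.extend (Set.subset_univ _) :=
    hs.subset_extend _ ⟨l, rfl⟩
  have : F (y l) = tv (y l) := by
    have := B.constr_basis ℝ (fun i => tv ↑i) ⟨y l, hmem⟩
    have hB : B ⟨y l, hmem⟩ = y l := Module.Basis.extend_apply_self hs ⟨y l, hmem⟩
    rw [hB] at this
    rw [this]
  rw [this]
  have hex : ∃ l', y l' = y l := ⟨l, rfl⟩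
  have : tv (y l) = t hex.choose := dif_pos hex
  rw [this, hinj hex.choose_spec]

/-! ### Polyhedral cones: Caratheodory, closedness, separation -/

def fcone {n : ℕ} {α : Type*} [Fintype α] (g : α → Fin n → ℝ) : Set (Fin n → ℝ) :=
  {x | ∃ r : α → ℝ, (∀ i, 0 ≤ r i) ∧ x = ∑ i, r i • g i}

lemma fcone_convex {n : ℕ} {α : Type*} [Fintype α] (g : α → Fin n → ℝ) :
    Convex ℝ (fcone g) := by
  rintro x ⟨r, hr, rfl⟩ y ⟨r', hr', rfl⟩ p q hp hq _
  refine ⟨fun i => p * r i + q * r' i,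
    fun i => add_nonneg (mul_nonneg hp (hr i)) (mul_nonneg hq (hr' i)), ?_⟩
  rw [Finset.smul_sum, Finset.smul_sum, ← Finset.sum_add_distrib]
  apply Finset.sum_congr rfl
  intro i _
  rw [add_smul, smul_smul, smul_smul]

lemma zero_mem_fcone {n : ℕ} {α : Type*} [Fintype α] (g : α → Fin n → ℝ) :
    (0 : Fin n → ℝ) ∈ fcone g :=
  ⟨0, fun _ => le_refl 0, by simp⟩

lemma smul_mem_fcone {n : ℕ} {α : Type*} [Fintype α] {g : α → Fin n → ℝ} {x : Fin n → ℝ}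
    {c : ℝ} (hc : 0 ≤ c) (hx : x ∈ fcone g) : c • x ∈ fcone g := by
  obtain ⟨r, hr, rfl⟩ := hx
  refine ⟨fun i => c * r i, fun i => mul_nonneg hc (hr i), ?_⟩
  rw [Finset.smul_sum]
  apply Finset.sum_congr rfl
  intro i _
  rw [smul_smul]

/-- Caratheodory step: any element of `fcone g` has a representation supported on a
linearly independent subfamily. -/
lemma fcone_caratheodory {n : ℕ} {α : Type*} [Fintype α] [DecidableEq α]
    (g : α → Fin n → ℝ) (x : Fin n → ℝ) (hx : x ∈ fcone g) :
    ∃ (T : Finset α) (r : α → ℝ), LinearIndependent ℝ (fun i : T => g i) ∧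
      (∀ i, 0 ≤ r i) ∧ (∀ i ∉ T, r i = 0) ∧ x = ∑ i, r i • g i := by
  classical
  obtain ⟨r, hr, hxr⟩ := hx
  set N := (Finset.univ.filter fun i => r i ≠ 0).card with hN
  clear_value N
  induction N using Nat.strong_induction_on generalizing r with
  | _ N IH =>
    set T := Finset.univ.filter fun i => r i ≠ 0 with hT
    by_cases hli : LinearIndependent ℝ (fun i : T => g i)
    · refine ⟨T, r, hli, hr, fun i hi => ?_, hxr⟩
      by_contra hri
      exact hi (Finset.mem_filter.2 ⟨Finset.mem_univ i, hri⟩)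
    · obtain ⟨c, hcsum, i₁, hci₁⟩ := Fintype.not_linearIndependent_iff.1 hli
      -- extend c to α by zero
      set c₀ : α → ℝ := fun i => if h : i ∈ T then c ⟨i, h⟩ else 0 with hc₀
      have hc₀sum : ∑ i, c₀ i • g i = 0 := by
        rw [← Finset.sum_subset (Finset.subset_univ T) (fun i _ hi => by
          rw [hc₀]; simp only [dif_neg hi, zero_smul])]
        rw [← Finset.sum_attach T (fun i => c₀ i • g i)]
        rw [← hcsum]
        apply Finset.sum_congr rfl
        intro i _
        congr 1
        rw [hc₀]
        simp [i.2]
      have hc₀supp : ∀ i, c₀ i ≠ 0 → r i ≠ 0 := by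
        intro i hi
        by_contra hri
        apply hi
        have hiT : i ∉ T := by
          rw [hT]
          simp [hri]
        simp only [hc₀]
        rw [dif_neg hiT]
      have hc₀i₁ : c₀ (↑i₁ : α) ≠ 0 := by
        rw [hc₀]
        simpa [i₁.2] using hci₁
      -- wlog some coefficient is positive
      obtain ⟨c', hc'sum, hc'supp, i₂, hi₂⟩ :
          ∃ c' : α → ℝ, (∑ i, c' i • g i = 0) ∧ (∀ i, c' i ≠ 0 → r i ≠ 0) ∧
            ∃ i, 0 < c' i := by
        rcases lt_or_gt_of_ne hc₀i₁ with hneg | hpos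
        · refine ⟨-c₀, ?_, fun i hi => hc₀supp i (by simpa using hi), ⟨↑i₁, by simpa using hneg⟩⟩
          rw [← neg_zero, ← hc₀sum, ← Finset.sum_neg_distrib]
          exact Finset.sum_congr rfl fun i _ => by rw [Pi.neg_apply, neg_smul]
        · exact ⟨c₀, hc₀sum, hc₀supp, ↑i₁, hpos⟩
      set Sp := Finset.univ.filter fun i => 0 < c' i with hSp
      have hSpne : Sp.Nonempty := ⟨i₂, Finset.mem_filter.2 ⟨Finset.mem_univ _, hi₂⟩⟩
      obtain ⟨istar, histar, hmin⟩ := Finset.exists_mem_eq_inf' hSpne (fun i => r i / c' i)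
      set t₀ := Sp.inf' hSpne (fun i => r i / c' i) with ht₀
      have histar' : 0 < c' istar := (Finset.mem_filter.1 histar).2
      have ht₀0 : 0 ≤ t₀ := Finset.le_inf' hSpne _ (fun b hb =>
        div_nonneg (hr b) (le_of_lt (Finset.mem_filter.1 hb).2))
      set r' : α → ℝ := fun i => r i - t₀ * c' i with hr'
      have hr'0 : ∀ i, 0 ≤ r' i := by
        intro i
        rw [hr']
        by_cases hci : 0 < c' i
        · have h1 : t₀ ≤ r i / c' i := by
            rw [ht₀]
            exact Finset.inf'_le (fun j => r j / c' j)
              (by rw [hSp]; exact Finset.mem_filter.2 ⟨Finset.mem_univ i, hci⟩)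
          have := (le_div_iff₀ hci).1 h1
          simp only [sub_nonneg]
          linarith
        · push_neg at hci
          have : t₀ * c' i ≤ 0 := mul_nonpos_of_nonneg_of_nonpos ht₀0 hci
          have := hr i
          simp only [sub_nonneg]
          linarith
      have hxr' : x = ∑ i, r' i • g i := by
        rw [hxr]
        have : ∑ i, r' i • g i = ∑ i, r i • g i - t₀ • ∑ i, c' i • g i := by
          rw [Finset.smul_sum, ← Finset.sum_sub_distrib]
          apply Finset.sum_congr rfl
          intro i _
          rw [hr', sub_smul, smul_smul]
        rw [this, hc'sum, smul_zero, sub_zero]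
      have hr'istar : r' istar = 0 := by
        simp only [hr']
        rw [hmin, div_mul_cancel₀ _ (ne_of_gt histar')]
        ring
      have hsub : (Finset.univ.filter fun i => r' i ≠ 0) ⊆ T := by
        intro i hi
        have hri' : r' i ≠ 0 := (Finset.mem_filter.1 hi).2
        rw [hT]
        refine Finset.mem_filter.2 ⟨Finset.mem_univ _, ?_⟩
        intro hri
        apply hri'
        simp only [hr']
        rw [hri]
        by_cases hci : c' i = 0
        · rw [hci]; ring
        · exact absurd hri (hc'supp i hci)
      have hcard : (Finset.univ.filter fun i => r' i ≠ 0).card < N := by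
        rw [hN]
        apply Finset.card_lt_card
        rw [Finset.ssubset_iff_of_subset hsub]
        refine ⟨istar, ?_, fun h => (Finset.mem_filter.1 h).2 hr'istar⟩
        rw [hT]
        exact Finset.mem_filter.2 ⟨Finset.mem_univ _, hc'supp istar (ne_of_gt histar')⟩
      exact IH _ hcard r' hr'0 hxr' rfl

/-- the cone over a linearly independent family, with support in `T`, is closed. -/
lemma fcone_indep_closed {n : ℕ} {α : Type*} [Fintype α] (g : α → Fin n → ℝ) (T : Finset α)
    (hli : LinearIndependent ℝ (fun i : T => g i)) :
    IsClosed {x : Fin n → ℝ | ∃ r : α → ℝ, (∀ i, 0 ≤ r i) ∧ (∀ i ∉ T, r i = 0) ∧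
      x = ∑ i, r i • g i} := by
  classical
  set L : (T → ℝ) →ₗ[ℝ] (Fin n → ℝ) := Fintype.linearCombination ℝ (fun i : T => g i) with hL
  have hLapp : ∀ q : T → ℝ, L q = ∑ i : T, q i • g i := by
    intro q
    simp [hL, Fintype.linearCombination_apply]
  have hker : LinearMap.ker L = ⊥ := by
    rw [LinearMap.ker_eq_bot']
    intro q hq
    rw [hLapp] at hq
    funext i
    exact Fintype.linearIndependent_iff.1 hli q hq i
  have hclosedemb := LinearMap.isClosedEmbedding_of_injective hker
  have hposclosed : IsClosed {q : T → ℝ | ∀ i, 0 ≤ q i} := by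
    have : {q : T → ℝ | ∀ i, 0 ≤ q i} = ⋂ i, {q | 0 ≤ q i} := by
      ext q; simp [Set.mem_iInter]
    rw [this]
    exact isClosed_iInter fun i => isClosed_le continuous_const (continuous_apply i)
  have himage : {x : Fin n → ℝ | ∃ r : α → ℝ, (∀ i, 0 ≤ r i) ∧ (∀ i ∉ T, r i = 0) ∧
      x = ∑ i, r i • g i} = L '' {q : T → ℝ | ∀ i, 0 ≤ q i} := by
    ext x
    constructor
    · rintro ⟨r, hr0, hrT, rfl⟩
      refine ⟨fun i => r ↑i, fun i => hr0 ↑i, ?_⟩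
      rw [hLapp]
      rw [← Finset.sum_subset (Finset.subset_univ T) (fun i _ hi => by
        rw [hrT i hi, zero_smul])]
      rw [← Finset.sum_attach T (fun i => r i • g i), Finset.univ_eq_attach]
    · rintro ⟨q, hq0, rfl⟩
      refine ⟨fun i => if h : i ∈ T then q ⟨i, h⟩ else 0, fun i => ?_, fun i hi => dif_neg hi, ?_⟩
      · dsimp only
        by_cases h : i ∈ T
        · rw [dif_pos h]; exact hq0 _
        · rw [dif_neg h]
      · rw [hLapp]
        rw [← Finset.sum_subset (Finset.subset_univ T) (fun i _ hi => by
          simp only [dif_neg hi, zero_smul])]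
        rw [← Finset.sum_attach T (fun i => (if h : i ∈ T then q ⟨i, h⟩ else 0) • g i),
          Finset.univ_eq_attach]
        apply Finset.sum_congr rfl
        intro i _
        congr 1
        simp [i.2]
  rw [himage]
  exact hclosedemb.isClosedMap _ hposclosed

lemma fcone_isClosed {n : ℕ} {α : Type*} [Fintype α] (g : α → Fin n → ℝ) :
    IsClosed (fcone g) := by
  classical
  have : fcone g = ⋃ T : Finset α,
      (if LinearIndependent ℝ (fun i : T => g i) then
        {x : Fin n → ℝ | ∃ r : α → ℝ, (∀ i, 0 ≤ r i) ∧ (∀ i ∉ T, r i = 0) ∧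
          x = ∑ i, r i • g i} else ∅) := by
    ext x
    constructor
    · intro hx
      obtain ⟨T, r, hli, hr0, hrT, hxr⟩ := fcone_caratheodory g x hx
      refine Set.mem_iUnion.2 ⟨T, ?_⟩
      rw [if_pos hli]
      exact ⟨r, hr0, hrT, hxr⟩
    · intro hx
      obtain ⟨T, hT⟩ := Set.mem_iUnion.1 hx
      by_cases hli : LinearIndependent ℝ (fun i : T => g i)
      · rw [if_pos hli] at hT
        obtain ⟨r, hr0, _, hxr⟩ := hT
        exact ⟨r, hr0, hxr⟩
      · rw [if_neg hli] at hT
        exact absurd hT (Set.notMem_empty x)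
  rw [this]
  apply isClosed_iUnion_of_finite
  intro T
  by_cases hli : LinearIndependent ℝ (fun i : T => g i)
  · rw [if_pos hli]
    exact fcone_indep_closed g T hli
  · rw [if_neg hli]
    exact isClosed_empty

/-- Farkas-type separation for polyhedral cones. -/
lemma fcone_separation {n : ℕ} {α : Type*} [Fintype α] (g : α → Fin n → ℝ)
    (x₀ : Fin n → ℝ) (hx₀ : x₀ ∉ fcone g) :
    ∃ a : Fin n → ℝ, (∀ i, 0 ≤ dotp a (g i)) ∧ dotp a x₀ < 0 := by
  obtain ⟨f, u, hfx, hfb⟩ := geometric_hahn_banach_point_closed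
    (fcone_convex g) (fcone_isClosed g) hx₀
  have hu0 : u < 0 := by
    have := hfb 0 (zero_mem_fcone g)
    simpa using this
  have hpos : ∀ i, 0 ≤ f (g i) := by
    intro i
    by_contra hneg
    push_neg at hneg
    have ht : 0 ≤ u / f (g i) := le_of_lt (div_pos_iff.2 (Or.inr ⟨hu0, hneg⟩))
    have hgi : g i ∈ fcone g := by
      classical
      refine ⟨fun j => if j = i then 1 else 0, fun j => ?_, ?_⟩
      · dsimp only; split <;> norm_num
      · simp
    have hmem : (u / f (g i)) • g i ∈ fcone g := smul_mem_fcone ht hgi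
    have := hfb _ hmem
    rw [map_smul, smul_eq_mul, div_mul_cancel₀ _ (ne_of_lt hneg)] at this
    exact lt_irrefl u this
  obtain ⟨a, ha⟩ := exists_dotp_linear (f : (Fin n → ℝ) →ₗ[ℝ] ℝ)
  refine ⟨a, fun i => ?_, ?_⟩
  · rw [ha]; exact hpos i
  · rw [ha]
    calc (f : (Fin n → ℝ) →ₗ[ℝ] ℝ) x₀ = f x₀ := rfl
    _ < u := hfx
    _ < 0 := hu0

lemma dotp_neg_right {n : ℕ} (a : Fin n → ℝ) (y : Fin n → ℝ) : dotp a (-y) = -dotp a y := by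
  rw [dotp, dotp, ← Finset.sum_neg_distrib]
  apply Finset.sum_congr rfl
  intro j _
  simp

lemma dotp_sum_right {n : ℕ} {ι : Type*} (a : Fin n → ℝ) (s : Finset ι) (f : ι → Fin n → ℝ) :
    dotp a (∑ i ∈ s, f i) = ∑ i ∈ s, dotp a (f i) := by
  simp only [dotp]
  rw [Finset.sum_comm]
  apply Finset.sum_congr rfl
  intro j _
  rw [← Finset.mul_sum]
  congr 1
  simp

lemma dotp_smul_right {n : ℕ} (a : Fin n → ℝ) (c : ℝ) (y : Fin n → ℝ) :
    dotp a (c • y) = c * dotp a y := by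
  rw [dotp, dotp, Finset.mul_sum]
  apply Finset.sum_congr rfl
  intro j _
  simp
  ring

/-- main cone-separation lemma: if `i₀ ∈ I \ J` and the cones over `I`, `J` intersect in
the cone over `I ∩ J`, with `b` independent on `I`, then there is a linear functional
nonpositive on `b(I)`, nonnegative on `b(J)`, and negative at `b i₀`. -/
lemma cone_separation {n m : ℕ} (b : Fin m → Fin n → ℝ) (I J : Finset (Fin m))
    (hind : LinearIndependent ℝ (fun i : I => b i))
    (hinter : ∀ x, x ∈ coneOf m b I → x ∈ coneOf m b J → x ∈ coneOf m b (I ∩ J))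
    (i₀ : Fin m) (hi₀I : i₀ ∈ I) (hi₀J : i₀ ∉ J) :
    ∃ a : Fin n → ℝ, (∀ i ∈ I, dotp a (b i) ≤ 0) ∧ (∀ j ∈ J, 0 ≤ dotp a (b j)) ∧
      dotp a (b i₀) < 0 := by
  classical
  set g : Fin m ⊕ Fin m → Fin n → ℝ :=
    Sum.elim (fun j => if j ∈ J then b j else 0) (fun i => if i ∈ I then -(b i) else 0) with hg
  have hx₀ : b i₀ ∉ fcone g := by
    rintro ⟨r, hr0, hrx⟩
    set p : Fin m → ℝ := fun j => if j ∈ J then r (Sum.inl j) else 0 with hp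
    set q : Fin m → ℝ := fun i => if i ∈ I then r (Sum.inr i) else 0 with hq
    have hp0 : ∀ j, 0 ≤ p j := by
      intro j
      simp only [hp]
      by_cases h : j ∈ J
      · rw [if_pos h]; exact hr0 _
      · rw [if_neg h]
    have hq0 : ∀ i, 0 ≤ q i := by
      intro i
      simp only [hq]
      by_cases h : i ∈ I
      · rw [if_pos h]; exact hr0 _
      · rw [if_neg h]
    have hsum : b i₀ = (∑ j, p j • b j) - ∑ i, q i • b i := by
      rw [hrx, Fintype.sum_sum_type]
      have h1 : ∑ a₁, r (Sum.inl a₁) • g (Sum.inl a₁) = ∑ j, p j • b j := by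
        apply Finset.sum_congr rfl
        intro j _
        simp only [hg, Sum.elim_inl, hp]
        by_cases h : j ∈ J
        · rw [if_pos h, if_pos h]
        · rw [if_neg h, if_neg h, smul_zero, zero_smul]
      have h2 : ∑ a₂, r (Sum.inr a₂) • g (Sum.inr a₂) = -∑ i, q i • b i := by
        rw [← Finset.sum_neg_distrib]
        apply Finset.sum_congr rfl
        intro i _
        simp only [hg, Sum.elim_inr, hq]
        by_cases h : i ∈ I
        · rw [if_pos h, if_pos h, smul_neg]
        · rw [if_neg h, if_neg h, smul_zero, zero_smul, neg_zero]
      rw [h1, h2, sub_eq_add_neg]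
    set x : Fin n → ℝ := b i₀ + ∑ i, q i • b i with hxdef
    have hx1 : ∑ i, (q i + if i = i₀ then 1 else 0) • b i = x := by
      have hsplit : ∑ i, (q i + if i = i₀ then 1 else 0) • b i
          = (∑ i, q i • b i) + ∑ i, (if i = i₀ then (1:ℝ) else 0) • b i := by
        rw [← Finset.sum_add_distrib]
        apply Finset.sum_congr rfl
        intro i _
        rw [add_smul]
      have h3 : ∑ i, (if i = i₀ then (1:ℝ) else 0) • b i = b i₀ := by
        rw [Finset.sum_eq_single i₀]
        · rw [if_pos rfl, one_smul]
        · intro i _ hne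
          rw [if_neg hne, zero_smul]
        · intro h
          exact absurd (Finset.mem_univ i₀) h
      rw [hsplit, h3, hxdef]
      abel
    have hxI : x ∈ coneOf m b I := by
      refine ⟨fun i => q i + if i = i₀ then 1 else 0, ?_, ?_, hx1.symm⟩
      · intro i
        show (0:ℝ) ≤ q i + if i = i₀ then 1 else 0
        have ha1 : (0:ℝ) ≤ if i = i₀ then 1 else 0 := by positivity
        have ha2 := hq0 i
        linarith
      · intro i hi
        show q i + (if i = i₀ then (1:ℝ) else 0) = 0
        have h1 : q i = 0 := by
          simp only [hq]; rw [if_neg hi]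
        have h2 : i ≠ i₀ := fun h => hi (h ▸ hi₀I)
        rw [h1, if_neg h2, add_zero]
    have hxJ : x ∈ coneOf m b J := by
      refine ⟨p, hp0, ?_, ?_⟩
      · intro j hj
        simp only [hp]; rw [if_neg hj]
      · rw [hxdef]
        have h4 : (∑ j, p j • b j) = b i₀ + ∑ i, q i • b i := by
          rw [hsum]; abel
        rw [← h4]
    obtain ⟨u, hu0, huIJ, hux⟩ := hinter x hxI hxJ
    set w : Fin m → ℝ := fun i => (q i + if i = i₀ then 1 else 0) - u i with hw
    have huI : ∀ i, i ∉ I → u i = 0 := fun i hi =>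
      huIJ i (fun hmem => hi (Finset.mem_of_mem_inter_left hmem))
    have hwout : ∀ i ∉ I, w i = 0 := by
      intro i hi
      have h1 : q i = 0 := by simp only [hq]; rw [if_neg hi]
      have h2 : i ≠ i₀ := fun h => hi (h ▸ hi₀I)
      simp only [hw]
      rw [h1, if_neg h2, huI i hi]
      ring
    have hwsum : ∑ i : I, w ↑i • b ↑i = 0 := by
      have hstep : ∑ i : I, w ↑i • b ↑i = ∑ i, w i • b i := by
        rw [← Finset.sum_subset (Finset.subset_univ I) (fun i _ hi => by
          rw [hwout i hi, zero_smul])]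
        rw [← Finset.sum_attach I (fun i => w i • b i), Finset.univ_eq_attach]
      have hsplit : ∑ i, w i • b i = (∑ i, (q i + if i = i₀ then 1 else 0) • b i)
          - ∑ i, u i • b i := by
        rw [← Finset.sum_sub_distrib]
        apply Finset.sum_congr rfl
        intro i _
        simp only [hw]
        rw [sub_smul]
      rw [hstep, hsplit, hx1, ← hux, sub_self]
    have hz := Fintype.linearIndependent_iff.1 hind (fun i : I => w ↑i) hwsum ⟨i₀, hi₀I⟩
    have hu₀ : u i₀ = 0 :=
      huIJ i₀ (fun hmem => hi₀J (Finset.mem_of_mem_inter_right hmem))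
    simp only [hw] at hz
    simp [hu₀] at hz
    have := hq0 i₀
    linarith
  obtain ⟨a, hag, hax⟩ := fcone_separation g (b i₀) hx₀
  refine ⟨a, ?_, ?_, hax⟩
  · intro i hi
    have h := hag (Sum.inr i)
    rw [hg] at h
    simp only [Sum.elim_inr, if_pos hi] at h
    rw [dotp_neg_right] at h
    linarith
  · intro j hj
    have h := hag (Sum.inl j)
    rw [hg] at h
    simp only [Sum.elim_inl, if_pos hj] at h
    exact h

/-! ### Kernel of λ via exponential data -/

def bbf {n m : ℕ} (β : Fin m → Fin n → ℝ × ℝ × ℤ) (k : Fin m) : Fin n → ℝ := fun j => (β k j).1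
def ccf {n m : ℕ} (β : Fin m → Fin n → ℝ × ℝ × ℤ) (k : Fin m) : Fin n → ℝ := fun j => (β k j).2.1
def vvf {n m : ℕ} (β : Fin m → Fin n → ℝ × ℝ × ℤ) (k : Fin m) : Fin n → ℤ := fun j => (β k j).2.2

lemma lamMap_exp {n m : ℕ} (β : Fin m → Fin n → ℝ × ℝ × ℤ) (s θ : Fin m → ℝ) (j : Fin n) :
    lamMap β (fun k => Complex.exp (↑(s k) + ↑(θ k) * I)) j =
      Complex.exp (↑(∑ k, s k * bbf β k j) +
        ↑(∑ k, (s k * ccf β k j + θ k * vvf β k j)) * I) := by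
  rw [lamMap]
  have h1 : ∀ k ∈ Finset.univ, cpwT (β k j) (Complex.exp (↑(s k) + ↑(θ k) * I)) =
      Complex.exp (↑(s k * bbf β k j) + ↑(s k * ccf β k j + θ k * vvf β k j) * I) :=
    fun k _ => cpw_exp _ _ _ _ _
  rw [Finset.prod_congr rfl h1, ← Complex.exp_sum]
  congr 1
  rw [Finset.sum_add_distrib, ← Complex.ofReal_sum, ← Finset.sum_mul, ← Complex.ofReal_sum]

lemma ker_data {n m : ℕ} (β : Fin m → Fin n → ℝ × ℝ × ℤ) {h : Fin m → ℂ}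
    (h0 : ∀ k, h k ≠ 0) (h1 : lamMap β h = fun _ => 1) :
    ∃ (s θ : Fin m → ℝ) (M : Fin n → ℤ),
      (∀ k, h k = Complex.exp (↑(s k) + ↑(θ k) * I)) ∧
      (∀ j, ∑ k, s k * bbf β k j = 0) ∧
      (∀ j, ∑ k, (s k * ccf β k j + θ k * vvf β k j) = 2 * Real.pi * M j) := by
  classical
  set s : Fin m → ℝ := fun k => Real.log (‖h k‖) with hs
  set θ : Fin m → ℝ := fun k => Complex.arg (h k) with hθ
  have hexp : ∀ k, h k = Complex.exp (↑(s k) + ↑(θ k) * I) := fun k => exp_form (h0 k)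
  have hh : h = fun k => Complex.exp (↑(s k) + ↑(θ k) * I) := funext hexp
  have hj : ∀ j : Fin n, (∑ k, s k * bbf β k j = 0) ∧
      ∃ nn : ℤ, ∑ k, (s k * ccf β k j + θ k * vvf β k j) = 2 * Real.pi * nn := by
    intro j
    have h2 : lamMap β h j = 1 := by rw [h1]
    rw [hh, lamMap_exp] at h2
    obtain ⟨nn, hnn⟩ := Complex.exp_eq_one_iff.1 h2
    have hre := congrArg Complex.re hnn
    have him := congrArg Complex.im hnn
    simp at hre him
    exact ⟨hre, nn, by linarith⟩
  refine ⟨s, θ, fun j => (hj j).2.choose, hexp, fun j => (hj j).1, fun j => (hj j).2.choose_spec⟩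

lemma ker_of_data {n m : ℕ} (β : Fin m → Fin n → ℝ × ℝ × ℤ) (s θ : Fin m → ℝ) (M : Fin n → ℤ)
    (hb : ∀ j, ∑ k, s k * bbf β k j = 0)
    (hc : ∀ j, ∑ k, (s k * ccf β k j + θ k * vvf β k j) = 2 * Real.pi * M j) :
    lamMap β (fun k => Complex.exp (↑(s k) + ↑(θ k) * I)) = fun _ => 1 := by
  funext j
  rw [lamMap_exp, hb j, hc j]
  simp only [Complex.ofReal_zero, zero_add]
  exact (exp_I_eq_one_iff _).2 ⟨M j, by push_cast; ring⟩

/-! ### Separation framework on the quotient -/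

def SepData {n m : ℕ} (Δ : CompleteNonsingularTopFan n m) (z w : USigma Δ) : Prop :=
  ∃ A B : Set (USigma Δ), IsOpen A ∧ IsOpen B ∧
    (∀ x y, orbitRel Δ x y → (x ∈ A ↔ y ∈ A)) ∧
    (∀ x y, orbitRel Δ x y → (x ∈ B ↔ y ∈ B)) ∧
    z ∈ A ∧ w ∈ B ∧ A ∩ B = ∅

lemma SepData.symm {n m : ℕ} {Δ : CompleteNonsingularTopFan n m} {z w : USigma Δ}
    (h : SepData Δ z w) : SepData Δ w z := by
  obtain ⟨A, B, hA, hB, hAi, hBi, hz, hw, hd⟩ := h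
  exact ⟨B, A, hB, hA, hBi, hAi, hw, hz, by rw [Set.inter_comm]; exact hd⟩

lemma eqvGen_stable {X : Type*} {R : X → X → Prop} {A : Set X}
    (hA : ∀ x y, R x y → (x ∈ A ↔ y ∈ A)) :
    ∀ {x y}, Relation.EqvGen R x y → (x ∈ A ↔ y ∈ A) := by
  intro x y h
  induction h with
  | rel a b hab => exact hA a b hab
  | refl a => exact Iff.rfl
  | symm a b _ ih => exact ih.symm
  | trans a b c _ _ ih1 ih2 => exact ih1.trans ih2

lemma sepdata_to_open {n m : ℕ} (Δ : CompleteNonsingularTopFan n m) (z w : USigma Δ)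
    (h : SepData Δ z w) :
    ∃ U V : Set (Quot (orbitRel Δ)), IsOpen U ∧ IsOpen V ∧
      Quot.mk _ z ∈ U ∧ Quot.mk _ w ∈ V ∧ Disjoint U V := by
  obtain ⟨A, B, hA, hB, hAi, hBi, hz, hw, hd⟩ := h
  have hsatA : Quot.mk (orbitRel Δ) ⁻¹' (Quot.mk (orbitRel Δ) '' A) = A := by
    ext x
    constructor
    · rintro ⟨y, hy, hxy⟩
      exact (eqvGen_stable hAi (Quot.eq.1 hxy)).1 hy
    · intro hx
      exact ⟨x, hx, rfl⟩
  have hsatB : Quot.mk (orbitRel Δ) ⁻¹' (Quot.mk (orbitRel Δ) '' B) = B := by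
    ext x
    constructor
    · rintro ⟨y, hy, hxy⟩
      exact (eqvGen_stable hBi (Quot.eq.1 hxy)).1 hy
    · intro hx
      exact ⟨x, hx, rfl⟩
  refine ⟨Quot.mk _ '' A, Quot.mk _ '' B, ?_, ?_, ⟨z, hz, rfl⟩, ⟨w, hw, rfl⟩, ?_⟩
  · rw [isOpen_coinduced (f := Quot.mk (orbitRel Δ)), hsatA]
    exact hA
  · rw [isOpen_coinduced (f := Quot.mk (orbitRel Δ)), hsatB]
    exact hB
  · rw [Set.disjoint_left]
    rintro q ⟨x, hx, hqx⟩ ⟨y, hy, hqy⟩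
    have : y ∈ A := (eqvGen_stable hAi (Quot.eq.1 (hqy.trans hqx.symm).symm)).1 hx
    have : y ∈ A ∩ B := ⟨this, hy⟩
    rw [hd] at this
    exact this

/-! ### Radial separation -/

lemma dotp_sum_swap {n m : ℕ} (a : Fin n → ℝ) (b : Fin m → Fin n → ℝ) (s : Fin m → ℝ)
    (S : Finset (Fin m)) :
    ∑ k ∈ S, s k * dotp a (b k) = dotp a (∑ k ∈ S, s k • b k) := by
  rw [dotp_sum_right]
  apply Finset.sum_congr rfl
  intro k _
  rw [dotp_smul_right]

lemma radial_case {n m : ℕ} (Δ : CompleteNonsingularTopFan n m) (z w : USigma Δ)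
    (a : Fin n → ℝ) (c : ℝ)
    (hz : Real.exp c * PF (fun k => -(dotp a (bbf Δ.β k))) z.1 < PF (fun k => dotp a (bbf Δ.β k)) z.1)
    (hw : PF (fun k => dotp a (bbf Δ.β k)) w.1 < Real.exp c * PF (fun k => -(dotp a (bbf Δ.β k))) w.1) :
    SepData Δ z w := by
  classical
  set t : Fin m → ℝ := fun k => dotp a (bbf Δ.β k) with ht
  -- common scaling factor for the pair (PF t, PF (-t))
  have key : ∀ x y : USigma Δ, orbitRel Δ x y → ∃ c0 : ℝ, 0 < c0 ∧
      PF t y.1 = c0 * PF t x.1 ∧ PF (fun k => -(t k)) y.1 = c0 * PF (fun k => -(t k)) x.1 := by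
    rintro x y ⟨h, h0, h1, heq⟩
    obtain ⟨s, θ, M, hexp, hbal, _⟩ := ker_data Δ.β h0 h1
    have hy : y.1 = fun k => h k * x.1 k := funext heq
    have hh : h = fun k => Complex.exp (↑(s k) + ↑(θ k) * I) := funext hexp
    have hst : ∑ k, s k * t k = 0 := by
      rw [ht]
      rw [dotp_sum_swap a (bbf Δ.β) s Finset.univ]
      have hvec : (∑ k, s k • bbf Δ.β k) = 0 := by
        funext j
        rw [Finset.sum_apply]
        simp only [Pi.smul_apply, smul_eq_mul, Pi.zero_apply]
        exact hbal j
      rw [hvec]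
      simp [dotp]
    have hPt : PF t h = Real.exp (∑ k, s k * max (t k) 0) := by
      rw [hh]; exact PF_exp t s θ
    have hPnt : PF (fun k => -(t k)) h = Real.exp (∑ k, s k * max (-(t k)) 0) := by
      rw [hh]; exact PF_exp _ s θ
    have hsame : (∑ k, s k * max (t k) 0) = ∑ k, s k * max (-(t k)) 0 := by
      have hdiff : (∑ k, s k * max (t k) 0) - ∑ k, s k * max (-(t k)) 0 = ∑ k, s k * t k := by
        rw [← Finset.sum_sub_distrib]
        apply Finset.sum_congr rfl
        intro k _
        rw [← mul_sub, max_zero_sub_max_neg_zero_eq_self]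
      linarith
    refine ⟨Real.exp (∑ k, s k * max (t k) 0), Real.exp_pos _, ?_, ?_⟩
    · rw [hy, PF_mul t h x.1, hPt]
    · rw [hy, PF_mul _ h x.1, hPnt, hsame]
  set A : Set (USigma Δ) := {x | Real.exp c * PF (fun k => -(t k)) x.1 < PF t x.1} with hA
  set B : Set (USigma Δ) := {x | PF t x.1 < Real.exp c * PF (fun k => -(t k)) x.1} with hB
  have hAopen : IsOpen A := by
    have : IsOpen {x : Fin m → ℂ | Real.exp c * PF (fun k => -(t k)) x < PF t x} :=
      isOpen_lt (continuous_const.mul (PF_continuous _)) (PF_continuous t)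
    exact this.preimage continuous_subtype_val
  have hBopen : IsOpen B := by
    have : IsOpen {x : Fin m → ℂ | PF t x < Real.exp c * PF (fun k => -(t k)) x} :=
      isOpen_lt (PF_continuous t) (continuous_const.mul (PF_continuous _))
    exact this.preimage continuous_subtype_val
  refine ⟨A, B, hAopen, hBopen, ?_, ?_, hz, hw, ?_⟩
  · intro x y hxy
    obtain ⟨c0, hc0, hcp, hcm⟩ := key x y hxy
    simp only [hA, Set.mem_setOf_eq]
    rw [hcp, hcm]
    constructor
    · intro hlt
      calc Real.exp c * (c0 * PF (fun k => -(t k)) x.1)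
          = c0 * (Real.exp c * PF (fun k => -(t k)) x.1) := by ring
        _ < c0 * PF t x.1 := by exact (mul_lt_mul_iff_right₀ hc0).2 hlt
    · intro hlt
      have : c0 * (Real.exp c * PF (fun k => -(t k)) x.1) < c0 * PF t x.1 := by
        calc c0 * (Real.exp c * PF (fun k => -(t k)) x.1)
            = Real.exp c * (c0 * PF (fun k => -(t k)) x.1) := by ring
          _ < c0 * PF t x.1 := hlt
      exact lt_of_mul_lt_mul_left this (le_of_lt hc0)
  · intro x y hxy
    obtain ⟨c0, hc0, hcp, hcm⟩ := key x y hxy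
    simp only [hB, Set.mem_setOf_eq]
    rw [hcp, hcm]
    constructor
    · intro hlt
      calc c0 * PF t x.1 < c0 * (Real.exp c * PF (fun k => -(t k)) x.1) :=
            (mul_lt_mul_iff_right₀ hc0).2 hlt
        _ = Real.exp c * (c0 * PF (fun k => -(t k)) x.1) := by ring
    · intro hlt
      have : c0 * PF t x.1 < c0 * (Real.exp c * PF (fun k => -(t k)) x.1) := by
        calc c0 * PF t x.1 < Real.exp c * (c0 * PF (fun k => -(t k)) x.1) := hlt
          _ = c0 * (Real.exp c * PF (fun k => -(t k)) x.1) := by ring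
      exact lt_of_mul_lt_mul_left this (le_of_lt hc0)
  · ext x
    simp only [Set.mem_inter_iff, hA, hB, Set.mem_setOf_eq, Set.mem_empty_iff_false, iff_false]
    rintro ⟨h1, h2⟩
    exact lt_asymm h1 h2

/-! ### zero sets -/

def Zset {m : ℕ} (x : Fin m → ℂ) : Finset (Fin m) :=
  @Finset.filter _ (fun k => x k = 0) (Classical.decPred _) Finset.univ

lemma mem_Zset {m : ℕ} (x : Fin m → ℂ) (k : Fin m) : k ∈ Zset x ↔ x k = 0 := by
  rw [Zset, Finset.mem_filter]
  exact ⟨fun h => h.2, fun h => ⟨Finset.mem_univ _, h⟩⟩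

lemma Zset_cx {n m : ℕ} (Δ : CompleteNonsingularTopFan n m) (z : USigma Δ) :
    Zset z.1 ∈ Δ.cx := by
  obtain ⟨I, hIcx, hI⟩ := Set.mem_iUnion₂.1 z.2
  apply Δ.down_closed I hIcx
  intro k hk
  rw [mem_Zset] at hk
  by_contra hkI
  exact hI k hkI hk

/-! ### the two radial scenarios -/

lemma scenario_strict {n m : ℕ} (Δ : CompleteNonsingularTopFan n m) (z w : USigma Δ)
    (a : Fin n → ℝ) (i₀ : Fin m)
    (hzi₀ : z.1 i₀ = 0) (hti₀ : dotp a (bbf Δ.β i₀) < 0)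
    (hzI : ∀ k, z.1 k = 0 → dotp a (bbf Δ.β k) ≤ 0)
    (hwJ : ∀ k, w.1 k = 0 → 0 ≤ dotp a (bbf Δ.β k)) : SepData Δ z w := by
  have hQz : PF (fun k => -(dotp a (bbf Δ.β k))) z.1 = 0 :=
    PF_zero i₀ hzi₀ (by linarith)
  have hPz : 0 < PF (fun k => dotp a (bbf Δ.β k)) z.1 := PF_pos hzI
  have hQw : 0 < PF (fun k => -(dotp a (bbf Δ.β k))) w.1 :=
    PF_pos (fun k hk => by have := hwJ k hk; linarith)
  have hPw : 0 ≤ PF (fun k => dotp a (bbf Δ.β k)) w.1 := PF_nonneg _ _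
  set P := PF (fun k => dotp a (bbf Δ.β k)) w.1 with hP
  set Q := PF (fun k => -(dotp a (bbf Δ.β k))) w.1 with hQ
  apply radial_case Δ z w a (Real.log (P / Q) + 1)
  · rw [hQz, mul_zero]
    exact hPz
  · rcases eq_or_lt_of_le hPw with h0 | hPw'
    · rw [← hP, ← h0]
      positivity
    · rw [← hP, ← hQ]
      have hc : Real.exp (Real.log (P / Q) + 1) = P / Q * Real.exp 1 := by
        rw [Real.exp_add, Real.exp_log (div_pos hPw' hQw)]
      rw [hc]
      have he1 : (1:ℝ) < Real.exp 1 := by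
        have := Real.add_one_le_exp 1
        linarith
      calc P = P / Q * Q := by rw [div_mul_cancel₀ _ (ne_of_gt hQw)]
        _ < P / Q * Real.exp 1 * Q := by
            have hPQ : 0 < P / Q := div_pos hPw' hQw
            have : P / Q < P / Q * Real.exp 1 := by
              nlinarith
            exact (mul_lt_mul_iff_left₀ hQw).2 this
  
lemma scenario_equal {n m : ℕ} (Δ : CompleteNonsingularTopFan n m) (z w : USigma Δ)
    (a : Fin n → ℝ) (I : Finset (Fin m))
    (hzzero : ∀ k, z.1 k = 0 ↔ k ∈ I) (hwzero : ∀ k, w.1 k = 0 ↔ k ∈ I)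
    (hta : ∀ k ∈ I, dotp a (bbf Δ.β k) = 0)
    (hL : ∑ k ∈ Iᶜ, Real.log (‖w.1 k‖) * dotp a (bbf Δ.β k)
        < ∑ k ∈ Iᶜ, Real.log (‖z.1 k‖) * dotp a (bbf Δ.β k)) :
    SepData Δ z w := by
  classical
  set t : Fin m → ℝ := fun k => dotp a (bbf Δ.β k) with ht
  set Lz := ∑ k ∈ Iᶜ, Real.log (‖z.1 k‖) * t k with hLz
  set Lw := ∑ k ∈ Iᶜ, Real.log (‖w.1 k‖) * t k with hLw
  have hmax0 : ∀ k ∈ I, max (t k) 0 = 0 := fun k hk => by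
    rw [ht]; dsimp only; rw [hta k hk]; exact max_self 0
  have hmax0' : ∀ k ∈ I, max (-(t k)) 0 = 0 := fun k hk => by
    rw [ht]; dsimp only; rw [hta k hk, neg_zero]; exact max_self 0
  have hdiff : ∀ x : Fin m → ℂ,
      (∑ k ∈ Iᶜ, Real.log (‖x k‖) * max (t k) 0)
      - (∑ k ∈ Iᶜ, Real.log (‖x k‖) * max (-(t k)) 0)
      = ∑ k ∈ Iᶜ, Real.log (‖x k‖) * t k := by
    intro x
    rw [← Finset.sum_sub_distrib]
    apply Finset.sum_congr rfl
    intro k _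
    rw [← mul_sub, max_zero_sub_max_neg_zero_eq_self]
  have hPz := PF_eq_exp_on t z.1 I hzzero hmax0
  have hQz := PF_eq_exp_on (fun k => -(t k)) z.1 I hzzero hmax0'
  have hPw := PF_eq_exp_on t w.1 I hwzero hmax0
  have hQw := PF_eq_exp_on (fun k => -(t k)) w.1 I hwzero hmax0'
  apply radial_case Δ z w a ((Lz + Lw)/2)
  · rw [hPz, hQz, ← Real.exp_add, Real.exp_lt_exp]
    linarith [hdiff z.1, hL, hLz, hLw]
  · rw [hPw, hQw, ← Real.exp_add, Real.exp_lt_exp]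
    linarith [hdiff w.1, hL, hLz, hLw]

lemma sum_mul_swap {α β : Type*} (S : Finset α) (T : Finset β) (f : α → ℝ) (g : β → ℝ)
    (h : α → β → ℝ) :
    ∑ k ∈ S, f k * (∑ j ∈ T, g j * h k j) = ∑ j ∈ T, g j * (∑ k ∈ S, f k * h k j) := by
  have h1 : ∀ k ∈ S, f k * (∑ j ∈ T, g j * h k j) = ∑ j ∈ T, f k * (g j * h k j) :=
    fun k _ => Finset.mul_sum _ _ _
  rw [Finset.sum_congr rfl h1, Finset.sum_comm]
  apply Finset.sum_congr rfl
  intro j _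
  rw [Finset.mul_sum]
  apply Finset.sum_congr rfl
  intro k _
  ring

/-- The phase stage: `z` and `w` have the same zero set `I ∈ cx` and moduli matched
by a balanced `s'`. Then either they are equivalent, or separated by a phase invariant. -/
lemma phase_case {n m : ℕ} (Δ : CompleteNonsingularTopFan n m) (z w : USigma Δ)
    (S : Finset (Fin m)) (hIcx : S ∈ Δ.cx)
    (hzzero : ∀ k, z.1 k = 0 ↔ k ∈ S) (hwzero : ∀ k, w.1 k = 0 ↔ k ∈ S)
    (s' : Fin m → ℝ)
    (hs'σ : ∀ k ∉ S, s' k = Real.log (‖w.1 k‖) - Real.log (‖z.1 k‖))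
    (hbal : ∀ j, ∑ k, s' k * bbf Δ.β k j = 0) :
    SepData Δ z w ∨ orbitRel Δ z w := by
  classical
  set φ : Fin m → ℝ := fun k => Complex.arg (w.1 k) - Complex.arg (z.1 k) with hφ
  set Ψ : Fin n → ℝ := fun j => (∑ k, s' k * ccf Δ.β k j) + ∑ k ∈ Sᶜ, φ k * vvf Δ.β k j with hΨ
  by_cases hW : ∃ (lam : Fin m → ℝ) (μ : Fin n → ℤ), ∀ j,
      Ψ j = (∑ i ∈ S, lam i * (vvf Δ.β i j : ℝ)) + 2 * Real.pi * μ j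
  · right
    obtain ⟨lam, μ, hlam⟩ := hW
    set θ : Fin m → ℝ := fun k => if k ∈ S then -(lam k) else φ k with hθ
    refine ⟨fun k => Complex.exp (↑(s' k) + ↑(θ k) * I), fun k => Complex.exp_ne_zero _, ?_, ?_⟩
    · apply ker_of_data Δ.β s' θ μ hbal
      intro j
      have hsplitθ : ∑ k, θ k * (vvf Δ.β k j : ℝ)
          = (∑ k ∈ S, -(lam k) * (vvf Δ.β k j : ℝ)) + ∑ k ∈ Sᶜ, φ k * (vvf Δ.β k j : ℝ) := by
        rw [← Finset.sum_add_sum_compl S (fun k => θ k * (vvf Δ.β k j : ℝ))]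
        congr 1
        · apply Finset.sum_congr rfl
          intro k hk
          simp only [hθ]
          rw [if_pos hk]
        · apply Finset.sum_congr rfl
          intro k hk
          simp only [hθ]
          rw [if_neg (Finset.mem_compl.1 hk)]
      have hlj := hlam j
      rw [hΨ] at hlj
      dsimp only at hlj
      rw [Finset.sum_add_distrib, hsplitθ]
      have hneg : ∑ k ∈ S, -(lam k) * (vvf Δ.β k j : ℝ) = -∑ i ∈ S, lam i * (vvf Δ.β i j : ℝ) := by
        rw [← Finset.sum_neg_distrib]
        apply Finset.sum_congr rfl
        intro k _
        ring
      rw [hneg]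
      linarith [hlj]
    · intro k
      by_cases hk : k ∈ S
      · rw [(hwzero k).2 hk, (hzzero k).2 hk, mul_zero]
      · have hzk : z.1 k ≠ 0 := fun h => hk ((hzzero k).1 h)
        have hwk : w.1 k ≠ 0 := fun h => hk ((hwzero k).1 h)
        have hθk : θ k = φ k := by simp only [hθ]; rw [if_neg hk]
        have hs'k := hs'σ k hk
        conv_lhs => rw [exp_form hwk]
        conv_rhs => rw [exp_form hzk]
        rw [← Complex.exp_add, hθk, hs'k]
        congr 1
        simp only [hφ]
        push_cast
        ring
  · left
    obtain ⟨C, ρ, hCdet, hρinj, hCv⟩ := Δ.nonsingular S hIcx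
    set E : Matrix (Fin n) (Fin n) ℤ := C.det • C.adjugate with hE
    have hdet2 : C.det * C.det = 1 := by
      rcases Int.isUnit_iff.1 hCdet with h | h <;> rw [h] <;> norm_num
    have hCE : C * E = 1 := by
      rw [hE, Matrix.mul_smul, Matrix.mul_adjugate, smul_smul, hdet2, one_smul]
    have hEC : E * C = 1 := by
      rw [hE, Matrix.smul_mul, Matrix.adjugate_mul, smul_smul, hdet2, one_smul]
    set vals : Fin n → ℝ := fun t => ∑ j, (E j t : ℝ) * Ψ j with hvals
    have hdecomp : ∀ jj, Ψ jj = ∑ t, vals t * (C t jj : ℝ) := by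
      intro jj
      have h1 : ∀ t ∈ Finset.univ, vals t * (C t jj : ℝ)
          = ∑ j, Ψ j * ((E j t : ℝ) * (C t jj : ℝ)) := by
        intro t _
        simp only [hvals]
        rw [Finset.sum_mul]
        apply Finset.sum_congr rfl
        intro j _
        ring
      rw [Finset.sum_congr rfl h1, Finset.sum_comm]
      have h2 : ∀ j ∈ Finset.univ, (∑ t, Ψ j * ((E j t : ℝ) * (C t jj : ℝ)))
          = Ψ j * (((E * C) j jj : ℤ) : ℝ) := by
        intro j _
        rw [← Finset.mul_sum]
        congr 1
        rw [Matrix.mul_apply]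
        push_cast
        rfl
      rw [Finset.sum_congr rfl h2, Finset.sum_eq_single jj]
      · rw [hEC, Matrix.one_apply_eq]
        norm_num
      · intro j _ hj
        rw [hEC, Matrix.one_apply_ne hj]
        norm_num
      · intro hjj
        exact absurd (Finset.mem_univ jj) hjj
    have hT : ∃ t, (∀ i ∈ S, ρ i ≠ t) ∧ ¬∃ nn : ℤ, vals t = 2 * Real.pi * nn := by
      by_contra hno
      push_neg at hno
      apply hW
      set Timg := S.image ρ with hTimg
      have hch : ∀ t, ∃ nn : ℤ, t ∉ Timg → vals t = 2 * Real.pi * nn := by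
        intro t
        by_cases ht : t ∈ Timg
        · exact ⟨0, fun h => absurd ht h⟩
        · obtain ⟨nn, hnn⟩ := hno t (fun i hi hρi => ht (Finset.mem_image.2 ⟨i, hi, hρi⟩))
          exact ⟨nn, fun _ => hnn⟩
      choose NN hNN using hch
      refine ⟨fun i => if i ∈ S then vals (ρ i) else 0,
        fun jj => ∑ t ∈ Timgᶜ, NN t * C t jj, ?_⟩
      intro jj
      rw [hdecomp jj]
      rw [← Finset.sum_add_sum_compl Timg (fun t => vals t * (C t jj : ℝ))]
      congr 1
      · rw [hTimg, Finset.sum_image (fun x hx y hy hxy => hρinj hx hy hxy)]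
        apply Finset.sum_congr rfl
        intro i hi
        dsimp only
        rw [if_pos hi]
        congr 1
        have := hCv i hi jj
        rw [this]
        rfl
      · push_cast
        rw [Finset.mul_sum]
        apply Finset.sum_congr rfl
        intro t ht
        rw [hNN t (Finset.mem_compl.1 ht)]
        push_cast
        ring
    obtain ⟨t₀, hρt₀, hvalt₀⟩ := hT
    set ξ : Fin n → ℤ := fun j => E j t₀ with hξ
    have hξv : ∀ i ∈ S, ∑ j, ξ j * vvf Δ.β i j = 0 := by
      intro i hi
      have h1 : (C * E) (ρ i) t₀ = 0 := by rw [hCE]; exact Matrix.one_apply_ne (hρt₀ i hi)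
      rw [Matrix.mul_apply] at h1
      rw [← h1]
      apply Finset.sum_congr rfl
      intro j _
      rw [show C (ρ i) j = vvf Δ.β i j from hCv i hi j]
      simp only [hξ]
      ring
    obtain ⟨a, ha⟩ := exists_dual_vector (fun i : S => bbf Δ.β ↑i) (Δ.indep S hIcx)
      (fun i => -(∑ j, (ξ j : ℝ) * ccf Δ.β ↑i j))
    set d : Fin m → ℝ := fun k => dotp a (bbf Δ.β k) + ∑ j, (ξ j : ℝ) * ccf Δ.β k j with hd
    set e : Fin m → ℤ := fun k => ∑ j, ξ j * vvf Δ.β k j with he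
    have hdI : ∀ k ∈ S, d k = 0 := by
      intro k hk
      simp only [hd]
      rw [show dotp a (bbf Δ.β k) = -(∑ j, (ξ j : ℝ) * ccf Δ.β k j) from ha ⟨k, hk⟩]
      ring
    have heI : ∀ k ∈ S, e k = 0 := fun k hk => hξv k hk
    -- the invariant takes different values at z and w
    have hzS : ∀ k ∉ S, z.1 k ≠ 0 := fun k hk h => hk ((hzzero k).1 h)
    have hwS : ∀ k ∉ S, w.1 k ≠ 0 := fun k hk h => hk ((hwzero k).1 h)
    have hGz := GF_val d e z.1 S hzS hdI heI
    have hGw := GF_val d e w.1 S hwS hdI heI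
    -- key identity
    have hsd : ∀ (u : Fin m → ℝ), (∀ j, ∑ k, u k * bbf Δ.β k j = 0) →
        ∑ k, u k * d k = ∑ j, (ξ j : ℝ) * (∑ k, u k * ccf Δ.β k j) := by
      intro u hu
      have h1 : ∑ k, u k * d k = (∑ k, u k * dotp a (bbf Δ.β k))
          + ∑ k, u k * (∑ j, (ξ j : ℝ) * ccf Δ.β k j) := by
        rw [← Finset.sum_add_distrib]
        apply Finset.sum_congr rfl
        intro k _
        simp only [hd]
        ring
      have h2 : ∑ k, u k * dotp a (bbf Δ.β k) = 0 := by
        rw [dotp_sum_swap]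
        have hvec : (∑ k, u k • bbf Δ.β k) = 0 := by
          funext j
          rw [Finset.sum_apply]
          simp only [Pi.smul_apply, smul_eq_mul, Pi.zero_apply]
          exact hu j
        rw [hvec]
        simp [dotp]
      have h3 : ∑ k, u k * (∑ j, (ξ j : ℝ) * ccf Δ.β k j)
          = ∑ j, (ξ j : ℝ) * (∑ k, u k * ccf Δ.β k j) :=
        sum_mul_swap Finset.univ Finset.univ u (fun j => (ξ j : ℝ)) (fun k j => ccf Δ.β k j)
      rw [h1, h2, h3, zero_add]
    have hkey : (∑ k ∈ Sᶜ, (Real.log (‖w.1 k‖) * d k + Complex.arg (w.1 k) * e k))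
        - (∑ k ∈ Sᶜ, (Real.log (‖z.1 k‖) * d k + Complex.arg (z.1 k) * e k))
        = vals t₀ := by
      have h0 : (∑ k ∈ Sᶜ, (Real.log (‖w.1 k‖) * d k + Complex.arg (w.1 k) * e k))
          - (∑ k ∈ Sᶜ, (Real.log (‖z.1 k‖) * d k + Complex.arg (z.1 k) * e k))
          = (∑ k ∈ Sᶜ, s' k * d k) + ∑ k ∈ Sᶜ, φ k * e k := by
        rw [← Finset.sum_sub_distrib, ← Finset.sum_add_distrib]
        apply Finset.sum_congr rfl
        intro k hk
        rw [hs'σ k (Finset.mem_compl.1 hk)]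
        simp only [hφ]
        ring
      have h1 : ∑ k ∈ Sᶜ, s' k * d k = ∑ k, s' k * d k := by
        rw [← Finset.sum_add_sum_compl S (fun k => s' k * d k)]
        have : ∑ k ∈ S, s' k * d k = 0 := by
          apply Finset.sum_eq_zero
          intro k hk
          rw [hdI k hk, mul_zero]
        rw [this, zero_add]
      have h2 : ∑ k ∈ Sᶜ, φ k * (e k : ℝ) = ∑ j, (ξ j : ℝ) * (∑ k ∈ Sᶜ, φ k * vvf Δ.β k j) := by
        have he' : ∀ k ∈ Sᶜ, φ k * (e k : ℝ) = φ k * (∑ j, (ξ j : ℝ) * (vvf Δ.β k j : ℝ)) := by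
          intro k _
          congr 1
          simp only [he]
          push_cast
          rfl
        rw [Finset.sum_congr rfl he']
        exact sum_mul_swap Sᶜ Finset.univ φ (fun j => (ξ j : ℝ)) (fun k j => (vvf Δ.β k j : ℝ))
      rw [h0, h1, hsd s' hbal, h2, hvals]
      rw [← Finset.sum_add_distrib]
      apply Finset.sum_congr rfl
      intro j _
      simp only [hΨ, hξ]
      ring
    have hne : GF d e z.1 ≠ GF d e w.1 := by
      intro hEq
      rw [hGz, hGw] at hEq
      have hone : Complex.exp (↑((∑ k ∈ Sᶜ, (Real.log (‖w.1 k‖) * d k + Complex.arg (w.1 k) * e k))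
          - (∑ k ∈ Sᶜ, (Real.log (‖z.1 k‖) * d k + Complex.arg (z.1 k) * e k))) * Complex.I) = 1 := by
        rw [Complex.ofReal_sub, sub_mul, Complex.exp_sub, ← hEq, div_self (Complex.exp_ne_zero _)]
      obtain ⟨nn, hnn⟩ := (exp_I_eq_one_iff _).1 hone
      rw [hkey] at hnn
      exact hvalt₀ ⟨nn, hnn⟩
    -- invariance of GF under the relation
    have hGinv : ∀ x y : USigma Δ, orbitRel Δ x y → GF d e y.1 = GF d e x.1 := by
      rintro x y ⟨h, h0, h1, heq⟩
      obtain ⟨sk, θk, M, hexp, hbalk, hck⟩ := ker_data Δ.β h0 h1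
      have hy : y.1 = fun k => h k * x.1 k := funext heq
      have hh : h = fun k => Complex.exp (↑(sk k) + ↑(θk k) * Complex.I) := funext hexp
      rw [hy, GF_mul d e x.1 h0]
      have hGh : GF d e h = 1 := by
        rw [hh, GF_all_exp]
        have hsum : ∑ k, (sk k * d k + θk k * (e k : ℝ)) = 2 * Real.pi * (∑ j, (ξ j : ℝ) * M j) := by
          have ha1 : ∑ k, (sk k * d k + θk k * (e k : ℝ))
              = (∑ k, sk k * d k) + ∑ k, θk k * (e k : ℝ) := Finset.sum_add_distrib
          have ha2 : ∑ k, θk k * (e k : ℝ) = ∑ j, (ξ j : ℝ) * (∑ k, θk k * (vvf Δ.β k j : ℝ)) := by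
            have he' : ∀ k ∈ Finset.univ, θk k * (e k : ℝ)
                = θk k * (∑ j, (ξ j : ℝ) * (vvf Δ.β k j : ℝ)) := by
              intro k _
              congr 1
              simp only [he]
              push_cast
              rfl
            rw [Finset.sum_congr rfl he']
            exact sum_mul_swap Finset.univ Finset.univ θk (fun j => (ξ j : ℝ))
              (fun k j => (vvf Δ.β k j : ℝ))
          rw [ha1, ha2, hsd sk hbalk, ← Finset.sum_add_distrib]
          have ha3 : ∀ j ∈ Finset.univ, ((ξ j : ℝ) * (∑ k, sk k * ccf Δ.β k j)
              + (ξ j : ℝ) * (∑ k, θk k * (vvf Δ.β k j : ℝ)))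
              = 2 * Real.pi * ((ξ j : ℝ) * M j) := by
            intro j _
            have := hck j
            rw [← mul_add]
            have hcomb : (∑ k, sk k * ccf Δ.β k j) + ∑ k, θk k * (vvf Δ.β k j : ℝ)
                = ∑ k, (sk k * ccf Δ.β k j + θk k * (vvf Δ.β k j : ℝ)) :=
              Finset.sum_add_distrib.symm
            rw [hcomb, this]
            ring
          rw [Finset.sum_congr rfl ha3, ← Finset.mul_sum]
        rw [hsum]
        apply (exp_I_eq_one_iff _).2
        refine ⟨∑ j, ξ j * M j, ?_⟩
        push_cast
        ring
      rw [hGh, one_mul]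
    -- assemble separation data
    set Gz := GF d e z.1 with hGz'
    set Gw := GF d e w.1 with hGw'
    set ε := dist Gz Gw / 2 with hε
    have hεpos : 0 < ε := by
      rw [hε]
      have := dist_pos.2 hne
      linarith
    set Ω : Set (Fin m → ℂ) := {x | ∀ k ∉ S, x k ≠ 0} with hΩ
    have hΩopen : IsOpen Ω := by
      have hset : Ω = ⋂ k ∈ Sᶜ, ((fun x : Fin m → ℂ => x k) ⁻¹' {(0:ℂ)}ᶜ) := by
        ext x
        simp only [hΩ, Set.mem_setOf_eq, Set.mem_iInter, Set.mem_preimage, Set.mem_compl_iff,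
          Set.mem_singleton_iff, Finset.mem_compl]
      rw [hset]
      exact isOpen_biInter_finset fun k _ => isOpen_compl_singleton.preimage (continuous_apply k)
    have hGcont : ContinuousOn (GF d e) Ω := GF_continuousOn d e S hdI heI
    have hABopen : ∀ G₀ : ℂ, IsOpen (Subtype.val ⁻¹' (Ω ∩ GF d e ⁻¹' Metric.ball G₀ ε) :
        Set (USigma Δ)) := fun G₀ =>
      (hGcont.isOpen_inter_preimage hΩopen Metric.isOpen_ball).preimage continuous_subtype_val
    have hmemiff : ∀ x y : USigma Δ, orbitRel Δ x y → ∀ G₀ : ℂ,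
        (x ∈ (Subtype.val ⁻¹' (Ω ∩ GF d e ⁻¹' Metric.ball G₀ ε) : Set (USigma Δ)) ↔
         y ∈ (Subtype.val ⁻¹' (Ω ∩ GF d e ⁻¹' Metric.ball G₀ ε) : Set (USigma Δ))) := by
      intro x y hxy G₀
      obtain ⟨h, h0, h1, heq⟩ := hxy
      have hG := hGinv x y ⟨h, h0, h1, heq⟩
      have hΩiff : x.1 ∈ Ω ↔ y.1 ∈ Ω := by
        simp only [hΩ, Set.mem_setOf_eq]
        constructor
        · intro hx k hk
          rw [heq k]
          exact mul_ne_zero (h0 k) (hx k hk)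
        · intro hy k hk
          intro hzero
          have := hy k hk
          rw [heq k, hzero, mul_zero] at this
          exact this rfl
      simp only [Set.mem_preimage, Set.mem_inter_iff]
      rw [hG, hΩiff]
    refine ⟨Subtype.val ⁻¹' (Ω ∩ GF d e ⁻¹' Metric.ball Gz ε),
      Subtype.val ⁻¹' (Ω ∩ GF d e ⁻¹' Metric.ball Gw ε),
      hABopen Gz, hABopen Gw, fun x y hxy => hmemiff x y hxy Gz,
      fun x y hxy => hmemiff x y hxy Gw, ?_, ?_, ?_⟩
    · exact ⟨hzS, by simp [Metric.mem_ball, hεpos, hGz']⟩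
    · exact ⟨hwS, by simp [Metric.mem_ball, hεpos, hGw']⟩
    · ext x
      simp only [Set.mem_inter_iff, Set.mem_preimage, Set.mem_empty_iff_false, iff_false]
      rintro ⟨⟨_, hx1⟩, ⟨_, hx2⟩⟩
      rw [Metric.mem_ball] at hx1 hx2
      have htri : dist Gz Gw ≤ dist (GF d e x.1) Gz + dist (GF d e x.1) Gw := by
        rw [dist_comm (GF d e x.1) Gz]
        exact dist_triangle _ _ _
      rw [hε] at hx1 hx2
      linarith

lemma main_sep {n m : ℕ} (Δ : CompleteNonsingularTopFan n m) (z w : USigma Δ) :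
    SepData Δ z w ∨ orbitRel Δ z w := by
  classical
  set IS := Zset z.1 with hIS
  set JS := Zset w.1 with hJS
  have hIcx : IS ∈ Δ.cx := Zset_cx Δ z
  have hJcx : JS ∈ Δ.cx := Zset_cx Δ w
  have hzzero : ∀ k, z.1 k = 0 ↔ k ∈ IS := fun k => (mem_Zset z.1 k).symm
  have hwzero : ∀ k, w.1 k = 0 ↔ k ∈ JS := fun k => (mem_Zset w.1 k).symm
  have hinter : ∀ (P Q : Finset (Fin m)), P ∈ Δ.cx → Q ∈ Δ.cx → ∀ x,
      x ∈ coneOf m (fun i k => (Δ.β i k).1) P → x ∈ coneOf m (fun i k => (Δ.β i k).1) Q →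
      x ∈ coneOf m (fun i k => (Δ.β i k).1) (P ∩ Q) := by
    intro P Q hP hQ x h1 h2
    have hcap := Δ.cone_inter P hP Q hQ
    rw [← hcap]
    exact ⟨h1, h2⟩
  by_cases hIJ : IS = JS
  · set σ : Fin m → ℝ :=
      fun k => Real.log (‖w.1 k‖) - Real.log (‖z.1 k‖) with hσ
    by_cases hspan : ∃ r : Fin m → ℝ,
        (∑ k ∈ ISᶜ, σ k • bbf Δ.β k) = ∑ i ∈ IS, r i • bbf Δ.β i
    · obtain ⟨r, hr⟩ := hspan
      set s' : Fin m → ℝ := fun k => if k ∈ IS then -(r k) else σ k with hs'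
      have hbal : ∀ j, ∑ k, s' k * bbf Δ.β k j = 0 := by
        intro j
        have hvec : ∑ k, s' k • bbf Δ.β k = 0 := by
          rw [← Finset.sum_add_sum_compl IS (fun k => s' k • bbf Δ.β k)]
          have hA : ∑ k ∈ IS, s' k • bbf Δ.β k = -∑ i ∈ IS, r i • bbf Δ.β i := by
            rw [← Finset.sum_neg_distrib]
            apply Finset.sum_congr rfl
            intro k hk
            simp only [hs']
            rw [if_pos hk, neg_smul]
          have hB : ∑ k ∈ ISᶜ, s' k • bbf Δ.β k = ∑ k ∈ ISᶜ, σ k • bbf Δ.β k := by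
            apply Finset.sum_congr rfl
            intro k hk
            simp only [hs']
            rw [if_neg (Finset.mem_compl.1 hk)]
          rw [hA, hB, hr]
          exact neg_add_cancel _
        have hcf := congrFun hvec j
        rw [Finset.sum_apply] at hcf
        simpa using hcf
      have hs'σ : ∀ k ∉ IS, s' k
          = Real.log (‖w.1 k‖) - Real.log (‖z.1 k‖) := by
        intro k hk
        simp only [hs']
        rw [if_neg hk]
      exact phase_case Δ z w IS hIcx hzzero (fun k => hIJ ▸ hwzero k) s' hs'σ hbal
    · left
      set Θ : Fin n → ℝ := ∑ k ∈ ISᶜ, σ k • bbf Δ.β k with hΘdef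
      have hΘ : Θ ∉ Submodule.span ℝ (Set.range (fun i : IS => bbf Δ.β ↑i)) := by
        intro hmem
        obtain ⟨cI, hcI⟩ := (Submodule.mem_span_range_iff_exists_fun ℝ).1 hmem
        apply hspan
        refine ⟨fun i => if h : i ∈ IS then cI ⟨i, h⟩ else 0, ?_⟩
        rw [← hcI,
          ← Finset.sum_attach IS (fun i => (if h : i ∈ IS then cI ⟨i, h⟩ else 0) • bbf Δ.β i),
          Finset.univ_eq_attach]
        apply Finset.sum_congr rfl
        intro i _
        congr 1
        simp [i.2]
      have hliopt : LinearIndependent ℝ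
          (fun o : Option ↥IS => Option.elim o Θ (fun i => bbf Δ.β ↑i)) := by
        rw [linearIndependent_option]
        exact ⟨Δ.indep IS hIcx, hΘ⟩
      obtain ⟨a, ha⟩ := exists_dual_vector _ hliopt
        (fun o => Option.elim o (-1 : ℝ) (fun _ => 0))
      apply scenario_equal Δ z w a IS hzzero (fun k => hIJ ▸ hwzero k)
        (fun k hk => ha (some ⟨k, hk⟩))
      have hdot : dotp a Θ = -1 := ha none
      rw [hΘdef, ← dotp_sum_swap a (bbf Δ.β) σ ISᶜ] at hdot
      have hdiff : ∑ k ∈ ISᶜ, Real.log (‖z.1 k‖) * dotp a (bbf Δ.β k)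
           - ∑ k ∈ ISᶜ, Real.log (‖w.1 k‖) * dotp a (bbf Δ.β k)
           = -∑ k ∈ ISᶜ, σ k * dotp a (bbf Δ.β k) := by
        rw [← Finset.sum_sub_distrib, ← Finset.sum_neg_distrib]
        apply Finset.sum_congr rfl
        intro k _
        simp only [hσ]
        ring
      linarith [hdiff, hdot]
  · left
    by_cases hsub : IS ⊆ JS
    · have hss : IS ⊂ JS := ⟨hsub, fun h => hIJ (le_antisymm hsub h)⟩
      obtain ⟨j₀, hj₀J, hj₀I⟩ := Finset.exists_of_ssubset hss
      obtain ⟨a, haJ, haI, haj₀⟩ := cone_separation (fun i k => (Δ.β i k).1) JS IS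
        (Δ.indep JS hJcx) (hinter JS IS hJcx hIcx) j₀ hj₀J hj₀I
      exact (scenario_strict Δ w z a j₀ ((hwzero j₀).2 hj₀J) haj₀
        (fun k hk => haJ k ((hwzero k).1 hk))
        (fun k hk => haI k ((hzzero k).1 hk))).symm
    · obtain ⟨i₀, hi₀, hni₀⟩ := Finset.not_subset.1 hsub
      obtain ⟨a, haI, haJ, hai₀⟩ := cone_separation (fun i k => (Δ.β i k).1) IS JS
        (Δ.indep IS hIcx) (hinter IS JS hIcx hJcx) i₀ hi₀ hni₀
      exact scenario_strict Δ z w a i₀ ((hzzero i₀).2 hi₀) hai₀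
        (fun k hk => haI k ((hzzero k).1 hk))
        (fun k hk => haJ k ((hwzero k).1 hk))

end XD

/-- the quotient space `X(Δ) = U(Σ)/Ker λ` associated to a complete
non-singular topological fan `Δ` is Hausdorff. -/
theorem XDelta_t2 (n m : ℕ) (Δ : CompleteNonsingularTopFan n m) :
    T2Space (Quot (orbitRel Δ)) := by
  constructor
  intro x y hxy
  obtain ⟨z, rfl⟩ := Quot.exists_rep x
  obtain ⟨w, rfl⟩ := Quot.exists_rep y
  rcases XD.main_sep Δ z w with hsep | hrel
  · obtain ⟨U, V, hU, hV, hzU, hwV, hUV⟩ := XD.sepdata_to_open Δ z w hsep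
    exact ⟨U, V, hU, hV, hzU, hwV, hUV⟩
  · exact absurd (Quot.sound hrel) hxy
end
end
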